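/- arXiv:math/0506542 — 5 statements merged into one kernel-verified Lean document; each statement's English description precedes it below -/
import Mathlib

section
/- Conservation of the quantities Γ: let A be a commutative ring, R : ℤ → A, m ≥ 1 and g_1, …, g_m ∈ A. If R satisfies the master equation, then for every natural number j ≥ 1 the quantity Γ_{2j}(n) is independent of n, i.e. Γ_{2j}(n+1) = Γ_{2j}(n) for all integers n ≥ 0. -/
open Finset

variable {A : Type*} [CommRing A]

/-- End height of a walk starting at a given height, with steps given by a list of
Booleans (`true` = ascending step `+1`, `false` = descending step `-1`). -/
def walkEnd : ℤ → List Bool → ℤ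
  | a, [] => a
  | a, true :: s => walkEnd (a + 1) s
  | a, false :: s => walkEnd (a - 1) s

/-- Weight of a walk: the product of `R h` over all descending steps `h → h - 1`. -/
def walkWeight (R : ℤ → A) : ℤ → List Bool → A
  | _, [] => 1
  | a, true :: s => walkWeight R (a + 1) s
  | a, false :: s => R a * walkWeight R (a - 1) s

/-- Whether every height visited by the walk (including the first and last) is `≥ c`. -/
def walkAbove (c : ℤ) : ℤ → List Bool → Bool
  | a, [] => decide (c ≤ a)
  | a, true :: s => decide (c ≤ a) && walkAbove c (a + 1) s
  | a, false :: s => decide (c ≤ a) && walkAbove c (a - 1) s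

/-- `Zw R a b k`: the generating function of walks of length `k` from height `a` to
height `b`, each walk weighted by `R h` per descending step from height `h`. -/
def Zw (R : ℤ → A) (a b : ℤ) (k : ℕ) : A :=
  ∑ s : Fin k → Bool,
    if walkEnd a (List.ofFn s) = b then walkWeight R a (List.ofFn s) else 0

/-- `Zwp R a b k`: the same generating function, restricted to walks staying at
heights `≥ a` ("positive walks"). -/
def Zwp (R : ℤ → A) (a b : ℤ) (k : ℕ) : A :=
  ∑ s : Fin k → Bool,
    if walkEnd a (List.ofFn s) = b ∧ walkAbove a a (List.ofFn s) = true then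
      walkWeight R a (List.ofFn s)
    else 0

/-- `Pdim R a b k`: hard-dimer partition function on the segment `[a,b]`: the sum over
`k`-element subsets `S` of `{a+1, …, b}` with no two consecutive elements of
`∏ i in S, R i` (a dimer on `[i-1,i]` carries weight `R i`). -/
noncomputable def Pdim (R : ℤ → A) (a b : ℤ) (k : ℕ) : A :=
  ∑ S ∈ Finset.powersetCard k (Finset.Icc (a + 1) b),
    if ∀ i ∈ S, i + 1 ∉ S then ∏ i ∈ S, R i else 0

/-- `Vp R g m a b = Σ_{k=1}^{m} g_k • Zw R a b (2k-1)`: grand-canonical generating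
function for walks of odd length from `a` to `b`. -/
def Vp (R : ℤ → A) (g : ℕ → A) (m : ℕ) (a b : ℤ) : A :=
  ∑ k ∈ Finset.Icc 1 m, g k * Zw R a b (2 * k - 1)

/-- The conserved quantities `Γ_{2i}(n)`; `Gam R g m i n` stands for `Γ_{2i}(n)`. -/
def Gam (R : ℤ → A) (g : ℕ → A) (m : ℕ) (i : ℕ) (n : ℤ) : A :=
  if i = 0 then R (n - 1) - Vp R g m (n - 1) (n - 2) + (if n = 0 then 1 else 0)
  else
    Zwp R (n - 1) (n - 1) (2 * i) *
        (R (n - 1) - Vp R g m (n - 1) (n - 2) + (if n = 0 then 1 else 0)) -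
      ∑ j ∈ Finset.Icc 1 i,
        Zwp R (n - 1) (n - 1 + 2 * (j : ℤ)) (2 * i) * Vp R g m (n + 2 * (j : ℤ) - 1) (n - 2)

/-- The symmetric conserved quantities `Γ̃_{2i}(n)`; `Gamt R g m i n` stands
for `Γ̃_{2i}(n)`. -/
def Gamt (R : ℤ → A) (g : ℕ → A) (m : ℕ) (i : ℕ) (n : ℤ) : A :=
  if i = 0 then R n - Vp R g m n (n - 1)
  else
    (Zw R n (n - 1) (2 * i - 1) - R (n - 1) * R (n + 1) * Zw R (n - 2) (n + 1) (2 * i - 1)) *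
        (R n - Vp R g m n (n - 1)) -
      ∑ j ∈ Finset.Icc 1 i,
        (Zw R (n - (j : ℤ)) (n + (j : ℤ) - 1) (2 * i - 1) -
            R (n - (j : ℤ) - 1) * R (n + (j : ℤ) + 1) *
              Zw R (n - (j : ℤ) - 2) (n + (j : ℤ) + 1) (2 * i - 1)) *
          Vp R g m (n + (j : ℤ)) (n - (j : ℤ) - 1)

/-- The master equation: `R i = 0` for `i < 0` and `R n = 1 + V'_{n,n-1}` for `n ≥ 0`. -/
def MasterEq (R : ℤ → A) (g : ℕ → A) (m : ℕ) : Prop :=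
  (∀ i : ℤ, i < 0 → R i = 0) ∧ ∀ n : ℤ, 0 ≤ n → R n = 1 + Vp R g m n (n - 1)

/-- `Zodd R a b i = Zw R a b (2i-1)`, with the convention that for `i = 0`
(walks of length `-1`) it equals `1` if `b = a - 1` and `0` otherwise. -/
def Zodd (R : ℤ → A) (a b : ℤ) (i : ℕ) : A :=
  if i = 0 then (if b = a - 1 then 1 else 0) else Zw R a b (2 * i - 1)

/-- Binomial coefficient with an integer lower index, with the convention that it
vanishes for negative lower index. -/
def Cz (n : ℕ) (p : ℤ) : ℤ := if 0 ≤ p then n.choose p.toNat else 0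

namespace Stmt9Aux

variable {A : Type*} [CommRing A]

theorem walkEnd_append (a : ℤ) (s t : List Bool) :
    walkEnd a (s ++ t) = walkEnd (walkEnd a s) t := by
  induction s generalizing a with
  | nil => rfl
  | cons x s ih => cases x <;> simp only [List.cons_append, walkEnd] <;> exact ih _

theorem walkWeight_append (R : ℤ → A) (a : ℤ) (s t : List Bool) :
    walkWeight R a (s ++ t) = walkWeight R a s * walkWeight R (walkEnd a s) t := by
  induction s generalizing a with
  | nil => simp [walkWeight, walkEnd]
  | cons x s ih =>
    cases x <;> simp only [List.cons_append, walkWeight, walkEnd, List.append_eq] <;>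
      rw [ih] <;> ring

theorem walkAbove_head (c a : ℤ) (s : List Bool) :
    walkAbove c a s = (decide (c ≤ a) && walkAbove c a s) := by
  cases s with
  | nil => simp [walkAbove]
  | cons x t => cases x <;> simp [walkAbove, Bool.and_assoc]

theorem walkAbove_append (c a : ℤ) (s t : List Bool) :
    walkAbove c a (s ++ t) = (walkAbove c a s && walkAbove c (walkEnd a s) t) := by
  induction s generalizing a with
  | nil =>
    simp only [List.nil_append, walkAbove, walkEnd]
    exact walkAbove_head c a t
  | cons x s ih =>
    cases x <;> simp only [List.cons_append, walkAbove, walkEnd, List.append_eq, ih,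
      Bool.and_assoc]

theorem le_walkEnd_of_walkAbove {c a : ℤ} {s : List Bool} (h : walkAbove c a s = true) :
    c ≤ walkEnd a s := by
  induction s generalizing a with
  | nil => simpa [walkAbove, walkEnd] using h
  | cons x s ih =>
    cases x <;> simp only [walkAbove, Bool.and_eq_true, decide_eq_true_eq] at h <;>
      exact ih h.2

theorem le_of_walkAbove {c a : ℤ} {s : List Bool} (h : walkAbove c a s = true) : c ≤ a := by
  cases s with
  | nil => simpa [walkAbove] using h
  | cons x s =>
    cases x <;> simp only [walkAbove, Bool.and_eq_true, decide_eq_true_eq] at h <;> exact h.1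

theorem walkEnd_le (a : ℤ) (s : List Bool) :
    a - s.length ≤ walkEnd a s ∧ walkEnd a s ≤ a + s.length := by
  induction s generalizing a with
  | nil => simp [walkEnd]
  | cons x s ih =>
    cases x <;> simp only [walkEnd, List.length_cons] <;>
    · obtain ⟨h1, h2⟩ := ih (a + 1) <;> obtain ⟨h1', h2'⟩ := ih (a - 1) <;>
      constructor <;> push_cast <;> omega

theorem even_walkEnd (a : ℤ) (s : List Bool) :
    Even (walkEnd a s - a + s.length) := by
  induction s generalizing a with
  | nil => simp [walkEnd]
  | cons x s ih =>
    cases x <;> simp only [walkEnd, List.length_cons] <;> push_cast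
    · obtain ⟨r, hr⟩ := ih (a - 1)
      exact ⟨r, by omega⟩
    · obtain ⟨r, hr⟩ := ih (a + 1)
      exact ⟨r + 1, by omega⟩

/-- Walks with a floor `c`. -/
def Zf (R : ℤ → A) (c a b : ℤ) (k : ℕ) : A :=
  ∑ s : Fin k → Bool,
    if walkEnd a (List.ofFn s) = b ∧ walkAbove c a (List.ofFn s) = true then
      walkWeight R a (List.ofFn s)
    else 0

theorem Zwp_eq_Zf (R : ℤ → A) (a b : ℤ) (k : ℕ) : Zwp R a b k = Zf R a a b k := rfl

theorem sum_pi_cons (k : ℕ) (F : (Fin (k + 1) → Bool) → A) :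
    ∑ s, F s = ∑ s : Fin k → Bool, (F (Fin.cons true s) + F (Fin.cons false s)) := by
  rw [← ((Fin.consEquiv (fun _ : Fin (k + 1) => Bool)).sum_comp F)]
  rw [Fintype.sum_prod_type]
  simp only [Fin.consEquiv, Equiv.coe_fn_mk, Fintype.sum_bool]
  rw [Finset.sum_add_distrib]
  try first | rfl | exact add_comm _ _

theorem sum_pi_snoc (k : ℕ) (F : (Fin (k + 1) → Bool) → A) :
    ∑ s, F s = ∑ s : Fin k → Bool, (F (Fin.snoc s false) + F (Fin.snoc s true)) := by
  rw [← ((Fin.snocEquiv (fun _ : Fin (k + 1) => Bool)).sum_comp F)]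
  rw [Fintype.sum_prod_type]
  simp only [Fin.snocEquiv, Equiv.coe_fn_mk, Fintype.sum_bool]
  rw [Finset.sum_add_distrib]
  try first | rfl | exact add_comm _ _

theorem ofFn_cons' (k : ℕ) (x : Bool) (s : Fin k → Bool) :
    List.ofFn (Fin.cons x s) = x :: List.ofFn s := List.ofFn_cons x s

theorem ofFn_snoc' (k : ℕ) (x : Bool) (s : Fin k → Bool) :
    List.ofFn (Fin.snoc s x) = List.ofFn s ++ [x] := by
  rw [List.ofFn_succ']
  simp [List.concat_eq_append]

theorem Zw_zero (R : ℤ → A) (a b : ℤ) : Zw R a b 0 = if a = b then 1 else 0 := by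
  simp [Zw, walkEnd, walkWeight]

theorem Zf_zero (R : ℤ → A) (c a b : ℤ) :
    Zf R c a b 0 = if a = b ∧ c ≤ a then 1 else 0 := by
  simp [Zf, walkEnd, walkAbove, walkWeight]

end Stmt9Aux
namespace Stmt9Aux

variable {A : Type*} [CommRing A]

theorem Zw_succ_left (R : ℤ → A) (a b : ℤ) (k : ℕ) :
    Zw R a b (k + 1) = Zw R (a + 1) b k + R a * Zw R (a - 1) b k := by
  rw [Zw, sum_pi_cons]
  simp only [ofFn_cons', walkEnd, walkWeight, Zw]
  rw [Finset.sum_add_distrib, Finset.mul_sum]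
  congr 1
  exact Finset.sum_congr rfl fun s _ => by rw [mul_ite, mul_zero]

theorem Zf_succ_left (R : ℤ → A) {c a : ℤ} (b : ℤ) (k : ℕ) (hca : c ≤ a) :
    Zf R c a b (k + 1) = Zf R c (a + 1) b k + R a * Zf R c (a - 1) b k := by
  rw [Zf, sum_pi_cons]
  simp only [ofFn_cons', walkEnd, walkWeight, walkAbove, Zf, decide_eq_true hca,
    Bool.true_and]
  rw [Finset.sum_add_distrib, Finset.mul_sum]
  congr 1
  exact Finset.sum_congr rfl fun s _ => by rw [mul_ite, mul_zero]

theorem Zw_succ_right (R : ℤ → A) (a b : ℤ) (k : ℕ) :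
    Zw R a b (k + 1) = R (b + 1) * Zw R a (b + 1) k + Zw R a (b - 1) k := by
  rw [Zw, sum_pi_snoc]
  simp only [ofFn_snoc', Zw]
  rw [Finset.sum_add_distrib, Finset.mul_sum]
  congr 1
  · apply Finset.sum_congr rfl
    intro s _
    rw [walkEnd_append, walkWeight_append]
    simp only [walkEnd, walkWeight, mul_one]
    set e := walkEnd a (List.ofFn s) with he
    by_cases h : e = b + 1
    · rw [if_pos (by omega : e - 1 = b), if_pos h, h]
      ring
    · rw [if_neg (by omega : ¬ e - 1 = b), if_neg h, mul_zero]
  · apply Finset.sum_congr rfl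
    intro s _
    rw [walkEnd_append, walkWeight_append]
    simp only [walkEnd, walkWeight, mul_one]
    set e := walkEnd a (List.ofFn s) with he
    by_cases h : e = b - 1
    · rw [if_pos (by omega : e + 1 = b), if_pos h]
    · rw [if_neg (by omega : ¬ e + 1 = b), if_neg h]

theorem Zf_succ_right (R : ℤ → A) {c b : ℤ} (a : ℤ) (k : ℕ) (hcb : c ≤ b) :
    Zf R c a b (k + 1) = R (b + 1) * Zf R c a (b + 1) k + Zf R c a (b - 1) k := by
  rw [Zf, sum_pi_snoc]
  simp only [ofFn_snoc', Zf]
  rw [Finset.sum_add_distrib, Finset.mul_sum]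
  congr 1
  · apply Finset.sum_congr rfl
    intro s _
    rw [walkEnd_append, walkWeight_append, walkAbove_append]
    simp only [walkEnd, walkWeight, walkAbove, mul_one]
    set e := walkEnd a (List.ofFn s) with he
    set ab := walkAbove c a (List.ofFn s) with hab
    have hiff : (e - 1 = b ∧ (ab && (decide (c ≤ e) && decide (c ≤ e - 1))) = true)
        ↔ (e = b + 1 ∧ ab = true) := by
      simp only [Bool.and_eq_true, decide_eq_true_eq]
      constructor
      · rintro ⟨h1, h2, _, _⟩
        exact ⟨by omega, h2⟩
      · rintro ⟨h1, h2⟩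
        have hce : c ≤ e := le_walkEnd_of_walkAbove h2
        exact ⟨by omega, h2, hce, by omega⟩
    rw [if_congr hiff rfl rfl]
    by_cases h : e = b + 1 ∧ ab = true
    · rw [if_pos h, if_pos h, h.1]
      ring
    · rw [if_neg h, if_neg h, mul_zero]
  · apply Finset.sum_congr rfl
    intro s _
    rw [walkEnd_append, walkWeight_append, walkAbove_append]
    simp only [walkEnd, walkWeight, walkAbove, mul_one]
    set e := walkEnd a (List.ofFn s) with he
    set ab := walkAbove c a (List.ofFn s) with hab
    have hiff : (e + 1 = b ∧ (ab && (decide (c ≤ e) && decide (c ≤ e + 1))) = true)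
        ↔ (e = b - 1 ∧ ab = true) := by
      simp only [Bool.and_eq_true, decide_eq_true_eq]
      constructor
      · rintro ⟨h1, h2, _, _⟩
        exact ⟨by omega, h2⟩
      · rintro ⟨h1, h2⟩
        have hce : c ≤ e := le_walkEnd_of_walkAbove h2
        exact ⟨by omega, h2, hce, by omega⟩
    rw [if_congr hiff rfl rfl]

theorem Zf_of_start_lt (R : ℤ → A) {c a : ℤ} (b : ℤ) (k : ℕ) (h : a < c) :
    Zf R c a b k = 0 := by
  rw [Zf]
  apply Finset.sum_eq_zero
  intro s _
  rw [if_neg]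
  rintro ⟨-, h2⟩
  exact absurd (le_of_walkAbove h2) (by omega)

theorem Zf_of_end_lt (R : ℤ → A) {c b : ℤ} (a : ℤ) (k : ℕ) (h : b < c) :
    Zf R c a b k = 0 := by
  rw [Zf]
  apply Finset.sum_eq_zero
  intro s _
  rw [if_neg]
  rintro ⟨h1, h2⟩
  have := le_walkEnd_of_walkAbove h2
  omega

theorem Zf_of_gt (R : ℤ → A) {a b : ℤ} (c : ℤ) {k : ℕ} (h : a + k < b) :
    Zf R c a b k = 0 := by
  rw [Zf]
  apply Finset.sum_eq_zero
  intro s _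
  rw [if_neg]
  rintro ⟨h1, -⟩
  have h2 := (walkEnd_le a (List.ofFn s)).2
  rw [List.length_ofFn] at h2
  omega

theorem Zw_of_gt (R : ℤ → A) {a b : ℤ} {k : ℕ} (h : a + k < b) : Zw R a b k = 0 := by
  rw [Zw]
  apply Finset.sum_eq_zero
  intro s _
  rw [if_neg]
  intro h1
  have h2 := (walkEnd_le a (List.ofFn s)).2
  rw [List.length_ofFn] at h2
  omega

theorem Zf_parity (R : ℤ → A) {a b : ℤ} (c : ℤ) {k : ℕ} (h : ¬ Even (b - a + k)) :
    Zf R c a b k = 0 := by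
  rw [Zf]
  apply Finset.sum_eq_zero
  intro s _
  rw [if_neg]
  rintro ⟨h1, -⟩
  have h2 := even_walkEnd a (List.ofFn s)
  rw [List.length_ofFn, h1] at h2
  exact h h2

end Stmt9Aux
namespace Stmt9Aux

variable {A : Type*} [CommRing A]

theorem sum_Icc_bot {a b : ℤ} (h : a ≤ b) (f : ℤ → A) :
    ∑ x ∈ Finset.Icc a b, f x = f a + ∑ x ∈ Finset.Icc (a + 1) b, f x := by
  rw [show Finset.Icc a b = insert a (Finset.Icc (a + 1) b) by
    ext x; simp only [Finset.mem_Icc, Finset.mem_insert]; omega]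
  rw [Finset.sum_insert (by simp only [Finset.mem_Icc]; omega)]

theorem sum_Icc_top {a b : ℤ} (h : a ≤ b) (f : ℤ → A) :
    ∑ x ∈ Finset.Icc a b, f x = (∑ x ∈ Finset.Icc a (b - 1), f x) + f b := by
  rw [show Finset.Icc a b = insert b (Finset.Icc a (b - 1)) by
    ext x; simp only [Finset.mem_Icc, Finset.mem_insert]; omega]
  rw [Finset.sum_insert (by simp only [Finset.mem_Icc]; omega)]
  rw [add_comm]

theorem sum_Icc_shift (f : ℤ → A) (a b : ℤ) :
    ∑ h ∈ Finset.Icc a b, f (h + 1) = ∑ h ∈ Finset.Icc (a + 1) (b + 1), f h := by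
  rw [← Finset.map_add_right_Icc]
  rw [Finset.sum_map]
  rfl

/-- Restrict the `h`-range of a sum against `Zf q q h T` to the reachable interval. -/
theorem sum_Zf_ext (R : ℤ → A) (q : ℤ) (T N N' : ℕ) (hN : T ≤ N) (hN' : T ≤ N')
    (f : ℤ → A) :
    ∑ h ∈ Finset.Icc q (q + (N : ℤ)), Zf R q q h T * f h
      = ∑ h ∈ Finset.Icc q (q + (N' : ℤ)), Zf R q q h T * f h := by
  have key : ∀ M : ℕ, T ≤ M → ∑ h ∈ Finset.Icc q (q + (M : ℤ)), Zf R q q h T * f h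
      = ∑ h ∈ Finset.Icc q (q + (T : ℤ)), Zf R q q h T * f h := by
    intro M hM
    apply (Finset.sum_subset _ _).symm
    · intro x hx
      simp only [Finset.mem_Icc] at hx ⊢
      omega
    · intro x hx hx'
      simp only [Finset.mem_Icc] at hx hx'
      rw [Zf_of_gt R q (by omega), zero_mul]
  rw [key N hN, key N' hN']

theorem sum_even_odd_vanish (f : ℕ → A) (hf : ∀ t, ¬ Even t → f t = 0) :
    ∀ v : ℕ, ∑ t ∈ Finset.range (2 * v), f t = ∑ r ∈ Finset.range v, f (2 * r) := by
  intro v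
  induction v with
  | zero => rfl
  | succ v ih =>
    rw [show 2 * (v + 1) = (2 * v + 1) + 1 by omega]
    rw [Finset.sum_range_succ, Finset.sum_range_succ, ih, Finset.sum_range_succ]
    rw [hf (2 * v + 1) (by simp [Nat.even_add_one, Nat.even_mul])]
    rw [add_zero]

theorem sum_even_odd_vanish' (f : ℕ → A) (hf : ∀ t, ¬ Even t → f t = 0) (v : ℕ) :
    ∑ t ∈ Finset.range (2 * v + 1), f t = ∑ r ∈ Finset.range (v + 1), f (2 * r) := by
  rw [Finset.sum_range_succ, Finset.sum_range_succ, sum_even_odd_vanish f hf v]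

theorem sum_triangle (f : ℕ → ℕ → A) :
    ∀ W : ℕ, ∑ u ∈ Finset.range W, ∑ t ∈ Finset.range (u + 1), f t (u - t)
      = ∑ b ∈ Finset.range W, ∑ t ∈ Finset.range (W - b), f t b := by
  intro W
  induction W with
  | zero => rfl
  | succ W ih =>
    rw [Finset.sum_range_succ, ih]
    have split : ∀ b ∈ Finset.range W, ∑ t ∈ Finset.range (W + 1 - b), f t b
        = (∑ t ∈ Finset.range (W - b), f t b) + f (W - b) b := by
      intro b hb
      simp only [Finset.mem_range] at hb
      rw [show W + 1 - b = (W - b) + 1 by omega, Finset.sum_range_succ]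
    rw [Finset.sum_range_succ (fun b => ∑ t ∈ Finset.range (W + 1 - b), f t b)]
    rw [Finset.sum_congr rfl split, Finset.sum_add_distrib]
    have refl1 : ∑ b ∈ Finset.range (W + 1), f (W - b) b
        = ∑ t ∈ Finset.range (W + 1), f t (W - t) := by
      rw [← Finset.sum_range_reflect (fun b => f (W - b) b) (W + 1)]
      apply Finset.sum_congr rfl
      intro j hj
      simp only [Finset.mem_range] at hj
      congr 1 <;> omega
    have keyv : ∑ t ∈ Finset.range (W + 1), f t (W - t)
        = (∑ b ∈ Finset.range W, f (W - b) b) + f 0 W := by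
      rw [← refl1, Finset.sum_range_succ, Nat.sub_self]
    rw [keyv, show W + 1 - W = 1 by omega, Finset.sum_range_one]
    ring

/-- Floor-raising / last-visit decomposition. -/
theorem Zf_floor_raise (R : ℤ → A) (c : ℤ) :
    ∀ (l : ℕ) (b : ℤ), c < b → ∀ a : ℤ,
    Zf R c a b l = Zf R (c + 1) a b l
      + ∑ t ∈ Finset.range l, Zf R c a c t * Zf R (c + 1) (c + 1) b (l - 1 - t) := by
  intro l
  induction l with
  | zero =>
    intro b hb a
    rw [Finset.range_zero, Finset.sum_empty, add_zero, Zf_zero, Zf_zero]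
    by_cases h : a = b
    · rw [if_pos ⟨h, by omega⟩, if_pos ⟨h, by omega⟩]
    · rw [if_neg (by tauto), if_neg (by tauto)]
  | succ l ih =>
    intro b hb a
    rw [Finset.sum_range_succ]
    simp only [Nat.add_sub_cancel]
    by_cases hb2 : c + 1 < b
    · rw [Zf_succ_right R (c := c) a l (by omega), Zf_succ_right R (c := c + 1) a l (by omega)]
      rw [ih (b + 1) (by omega) a, ih (b - 1) (by omega) a]
      rw [show l - l = 0 by omega, Zf_zero, if_neg (by rintro ⟨h', -⟩; omega), mul_zero,
        add_zero]
      have e0 : ∀ t ∈ Finset.range l,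
          Zf R c a c t * Zf R (c + 1) (c + 1) b (l - t)
          = Zf R c a c t * (R (b + 1) * Zf R (c + 1) (c + 1) (b + 1) (l - 1 - t)
              + Zf R (c + 1) (c + 1) (b - 1) (l - 1 - t)) := by
        intro t ht
        simp only [Finset.mem_range] at ht
        rw [show l - t = (l - 1 - t) + 1 by omega,
          Zf_succ_right R (c := c + 1) (c + 1) (l - 1 - t) (by omega)]
      rw [Finset.sum_congr rfl e0]
      have e1 : ∑ t ∈ Finset.range l,
          Zf R c a c t * (R (b + 1) * Zf R (c + 1) (c + 1) (b + 1) (l - 1 - t)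
              + Zf R (c + 1) (c + 1) (b - 1) (l - 1 - t))
          = R (b + 1) * (∑ t ∈ Finset.range l,
              Zf R c a c t * Zf R (c + 1) (c + 1) (b + 1) (l - 1 - t))
            + ∑ t ∈ Finset.range l,
              Zf R c a c t * Zf R (c + 1) (c + 1) (b - 1) (l - 1 - t) := by
        rw [Finset.mul_sum, ← Finset.sum_add_distrib]
        exact Finset.sum_congr rfl fun t _ => by ring
      rw [e1]
      ring
    · have hb1 : b = c + 1 := by omega
      subst hb1
      rw [Zf_succ_right R (c := c) a l (by omega),
        Zf_succ_right R (c := c + 1) a l (le_refl (c + 1))]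
      rw [show c + 1 - 1 = c from by ring]
      rw [Zf_of_end_lt R (c := c + 1) (b := c) a l (by omega), add_zero]
      rw [ih (c + 1 + 1) (by omega) a]
      rw [show l - l = 0 by omega, Zf_zero, if_pos ⟨rfl, le_refl _⟩, mul_one]
      have e0 : ∀ t ∈ Finset.range l,
          Zf R c a c t * Zf R (c + 1) (c + 1) (c + 1) (l - t)
          = Zf R c a c t * (R (c + 1 + 1) * Zf R (c + 1) (c + 1) (c + 1 + 1) (l - 1 - t)) := by
        intro t ht
        simp only [Finset.mem_range] at ht
        rw [show l - t = (l - 1 - t) + 1 by omega,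
          Zf_succ_right R (c := c + 1) (c + 1) (l - 1 - t) (le_refl (c + 1))]
        rw [show c + 1 - 1 = c from by ring]
        rw [Zf_of_end_lt R (c := c + 1) (b := c) (c + 1) (l - 1 - t) (by omega), add_zero]
      rw [Finset.sum_congr rfl e0]
      have e1 : ∑ t ∈ Finset.range l,
          Zf R c a c t * (R (c + 1 + 1) * Zf R (c + 1) (c + 1) (c + 1 + 1) (l - 1 - t))
          = R (c + 1 + 1) * ∑ t ∈ Finset.range l,
              Zf R c a c t * Zf R (c + 1) (c + 1) (c + 1 + 1) (l - 1 - t) := by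
        rw [Finset.mul_sum]
        exact Finset.sum_congr rfl fun t _ => by ring
      rw [e1]
      ring

/-- Last-return decomposition of floor loops. -/
theorem Zf_last_return (R : ℤ → A) (c : ℤ) (k : ℕ) :
    Zf R c c c (k + 1)
      = R (c + 1) * ∑ t ∈ Finset.range k, Zf R c c c t * Zf R (c + 1) (c + 1) (c + 1) (k - 1 - t) := by
  rw [Zf_succ_right R (c := c) c k (le_refl c)]
  rw [Zf_of_end_lt R (c := c) (b := c - 1) c k (by omega), add_zero]
  rw [Zf_floor_raise R c k (c + 1) (by omega) c]
  rw [Zf_of_start_lt R (c := c + 1) (c + 1) k (by omega), zero_add]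

end Stmt9Aux
namespace Stmt9Aux

variable {A : Type*} [CommRing A]

theorem sum_Icc_shift' (f : ℤ → A) (a b : ℤ) :
    ∑ h ∈ Finset.Icc a b, f (h - 1) = ∑ h ∈ Finset.Icc (a - 1) (b - 1), f h := by
  have he : Finset.Icc a b = (Finset.Icc (a - 1) (b - 1)).map (addRightEmbedding 1) := by
    rw [Finset.map_add_right_Icc]
    norm_num
  rw [he, Finset.sum_map]
  apply Finset.sum_congr rfl
  intro x _
  simp [addRightEmbedding]

theorem sum_Icc_zero_bot {a b : ℤ} (h : a ≤ b) (f : ℤ → A) (hf : f a = 0) :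
    ∑ x ∈ Finset.Icc a b, f x = ∑ x ∈ Finset.Icc (a + 1) b, f x := by
  rw [sum_Icc_bot h, hf, zero_add]

theorem sum_Icc_zero_top {a b : ℤ} (h : a ≤ b) (f : ℤ → A) (hf : f b = 0) :
    ∑ x ∈ Finset.Icc a b, f x = ∑ x ∈ Finset.Icc a (b - 1), f x := by
  rw [sum_Icc_top h, hf, add_zero]

/-- The split-point shift lemma. -/
theorem SPL (R : ℤ → A) (q b : ℤ) (T S N : ℕ) (hN : T + 1 ≤ N) :
    ∑ h ∈ Finset.Icc q (q + (N : ℤ)), Zf R q q h (T + 1) * Zw R h b S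
      = (∑ h ∈ Finset.Icc q (q + (N : ℤ)), Zf R q q h T * Zw R h b (S + 1))
        - Zf R q q q T * (R q * Zw R (q - 1) b S) := by
  have hqN : q ≤ q + (N : ℤ) := by omega
  have lhs1 : ∑ h ∈ Finset.Icc q (q + (N : ℤ)), Zf R q q h (T + 1) * Zw R h b S
      = (∑ h ∈ Finset.Icc q (q + (N : ℤ)), R (h + 1) * Zf R q q (h + 1) T * Zw R h b S)
        + ∑ h ∈ Finset.Icc q (q + (N : ℤ)), Zf R q q (h - 1) T * Zw R h b S := by
    rw [← Finset.sum_add_distrib]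
    apply Finset.sum_congr rfl
    intro h hh
    simp only [Finset.mem_Icc] at hh
    rw [Zf_succ_right R (c := q) (b := h) q T hh.1]
    ring
  have rhs1 : ∑ h ∈ Finset.Icc q (q + (N : ℤ)), Zf R q q h T * Zw R h b (S + 1)
      = (∑ h ∈ Finset.Icc q (q + (N : ℤ)), R h * Zf R q q h T * Zw R (h - 1) b S)
        + ∑ h ∈ Finset.Icc q (q + (N : ℤ)), Zf R q q h T * Zw R (h + 1) b S := by
    rw [← Finset.sum_add_distrib]
    apply Finset.sum_congr rfl
    intro h _
    rw [Zw_succ_left R h b S]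
    ring
  have hS2 : ∑ h ∈ Finset.Icc q (q + (N : ℤ)), Zf R q q (h - 1) T * Zw R h b S
      = ∑ h ∈ Finset.Icc q (q + (N : ℤ)), Zf R q q h T * Zw R (h + 1) b S := by
    calc ∑ h ∈ Finset.Icc q (q + (N : ℤ)), Zf R q q (h - 1) T * Zw R h b S
        = ∑ h ∈ Finset.Icc q (q + (N : ℤ)), Zf R q q (h - 1) T * Zw R (h - 1 + 1) b S :=
          Finset.sum_congr rfl fun h _ => by rw [sub_add_cancel]
      _ = ∑ h ∈ Finset.Icc (q - 1) (q + (N : ℤ) - 1), Zf R q q h T * Zw R (h + 1) b S :=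
          sum_Icc_shift' (fun x => Zf R q q x T * Zw R (x + 1) b S) q (q + (N : ℤ))
      _ = ∑ h ∈ Finset.Icc (q - 1 + 1) (q + (N : ℤ) - 1), Zf R q q h T * Zw R (h + 1) b S := by
          apply sum_Icc_zero_bot (by omega)
          rw [Zf_of_end_lt R (c := q) (b := q - 1) q T (by omega), zero_mul]
      _ = ∑ h ∈ Finset.Icc q (q + (N : ℤ) - 1), Zf R q q h T * Zw R (h + 1) b S := by
          rw [show q - 1 + 1 = q from by ring]
      _ = ∑ h ∈ Finset.Icc q (q + (N : ℤ)), Zf R q q h T * Zw R (h + 1) b S := by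
          refine (sum_Icc_zero_top hqN _ ?_).symm
          rw [Zf_of_gt R q (by omega), zero_mul]
  have hS1 : ∑ h ∈ Finset.Icc q (q + (N : ℤ)), R (h + 1) * Zf R q q (h + 1) T * Zw R h b S
      = (∑ h ∈ Finset.Icc q (q + (N : ℤ)), R h * Zf R q q h T * Zw R (h - 1) b S)
        - Zf R q q q T * (R q * Zw R (q - 1) b S) := by
    have c1 : ∑ h ∈ Finset.Icc q (q + (N : ℤ)), R (h + 1) * Zf R q q (h + 1) T * Zw R h b S
        = ∑ h ∈ Finset.Icc (q + 1) (q + (N : ℤ) + 1),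
            R h * Zf R q q h T * Zw R (h - 1) b S := by
      calc ∑ h ∈ Finset.Icc q (q + (N : ℤ)), R (h + 1) * Zf R q q (h + 1) T * Zw R h b S
          = ∑ h ∈ Finset.Icc q (q + (N : ℤ)),
              R (h + 1) * Zf R q q (h + 1) T * Zw R (h + 1 - 1) b S :=
            Finset.sum_congr rfl fun h _ => by rw [add_sub_cancel_right]
        _ = _ := sum_Icc_shift (fun x => R x * Zf R q q x T * Zw R (x - 1) b S) q (q + (N : ℤ))
    rw [c1]
    have c2 : ∑ h ∈ Finset.Icc (q + 1) (q + (N : ℤ) + 1), R h * Zf R q q h T * Zw R (h - 1) b S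
        = ∑ h ∈ Finset.Icc (q + 1) (q + (N : ℤ)), R h * Zf R q q h T * Zw R (h - 1) b S := by
      have := sum_Icc_zero_top (a := q + 1) (b := q + (N : ℤ) + 1) (by omega)
        (fun h => R h * Zf R q q h T * Zw R (h - 1) b S)
        (by
          show R (q + (N : ℤ) + 1) * Zf R q q (q + (N : ℤ) + 1) T
              * Zw R (q + (N : ℤ) + 1 - 1) b S = 0
          rw [Zf_of_gt R q (by omega), mul_zero, zero_mul])
      rw [this, show q + (N : ℤ) + 1 - 1 = q + (N : ℤ) from by ring]
    rw [c2]
    have c3 : ∑ h ∈ Finset.Icc q (q + (N : ℤ)), R h * Zf R q q h T * Zw R (h - 1) b S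
        = R q * Zf R q q q T * Zw R (q - 1) b S
          + ∑ h ∈ Finset.Icc (q + 1) (q + (N : ℤ)), R h * Zf R q q h T * Zw R (h - 1) b S :=
      sum_Icc_bot hqN _
    rw [c3]
    ring
  rw [lhs1, rhs1, hS2, hS1]
  ring

theorem Zw_neg (R : ℤ → A) (hR : ∀ i : ℤ, i < 0 → R i = 0) :
    ∀ (l : ℕ) {a b : ℤ}, b ≤ -2 → b < a → Zw R a b l = 0 := by
  intro l
  induction l with
  | zero =>
    intro a b hb hba
    rw [Zw_zero, if_neg (by omega)]
  | succ l ih =>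
    intro a b hb hba
    rw [Zw_succ_right, hR (b + 1) (by omega), zero_mul, zero_add]
    exact ih (by omega) (by omega)

theorem JHeven (R : ℤ → A) (q : ℤ) (w : ℕ) (X : ℤ → A) :
    ∑ j ∈ Finset.Icc 1 w, Zf R q q (q + 2 * (j : ℤ)) (2 * w) * X (q + 2 * (j : ℤ))
      = ∑ h ∈ Finset.Icc (q + 1) (q + ((2 * w : ℕ) : ℤ)), Zf R q q h (2 * w) * X h := by
  rw [← Finset.sum_image (g := fun j : ℕ => q + 2 * (j : ℤ))
    (f := fun h => Zf R q q h (2 * w) * X h) (fun x _ y _ hxy => by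
      have h' : q + 2 * (x : ℤ) = q + 2 * (y : ℤ) := hxy
      omega)]
  apply Finset.sum_subset
  · intro x hx
    simp only [Finset.mem_image, Finset.mem_Icc] at hx ⊢
    obtain ⟨j, hj, rfl⟩ := hx
    omega
  · intro x hx hx'
    simp only [Finset.mem_image, Finset.mem_Icc] at hx hx'
    have hodd : ¬ Even (x - q) := by
      intro ⟨r, hr⟩
      exact hx' ⟨r.toNat, by omega, by omega⟩
    rw [Zf_parity R q (fun hcon => hodd (by
      have h2 : Even ((2 * w : ℕ) : ℤ) := ⟨w, by push_cast; ring⟩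
      have := hcon.sub h2
      simpa using this)), zero_mul]

theorem JHodd (R : ℤ → A) (q : ℤ) (V : ℕ) (X : ℤ → A) :
    ∑ j ∈ Finset.Icc 1 (V + 1), Zf R q q (q + 2 * (j : ℤ) - 1) (2 * V + 1) * X (q + 2 * (j : ℤ) - 1)
      = ∑ h ∈ Finset.Icc q (q + ((2 * V + 1 : ℕ) : ℤ)), Zf R q q h (2 * V + 1) * X h := by
  rw [← Finset.sum_image (g := fun j : ℕ => q + 2 * (j : ℤ) - 1)
    (f := fun h => Zf R q q h (2 * V + 1) * X h) (fun x _ y _ hxy => by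
      have h' : q + 2 * (x : ℤ) - 1 = q + 2 * (y : ℤ) - 1 := hxy
      omega)]
  apply Finset.sum_subset
  · intro x hx
    simp only [Finset.mem_image, Finset.mem_Icc] at hx ⊢
    obtain ⟨j, hj, rfl⟩ := hx
    omega
  · intro x hx hx'
    simp only [Finset.mem_image, Finset.mem_Icc] at hx hx'
    have hodd : Even (x - q) := by
      by_contra hc
      rw [Int.not_even_iff_odd] at hc
      obtain ⟨r, hr⟩ := hc
      exact hx' ⟨(r + 1).toNat, by omega, by omega⟩
    rw [Zf_parity R q (fun hcon => ?_), zero_mul]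
    have h2 : ¬ Even (((2 * V + 1 : ℕ) : ℤ)) := by
      rw [Int.not_even_iff_odd]
      exact ⟨V, by push_cast; ring⟩
    exact h2 (by
      have := hcon.sub hodd
      simpa using this)

end Stmt9Aux
namespace Stmt9Aux

variable {A : Type*} [CommRing A]

/-- The quantity `C_v(q)`. -/
noncomputable def Cq (R : ℤ → A) (g : ℕ → A) (m : ℕ) (q : ℤ) (v : ℕ) : A :=
  R q * Zf R q q q (2 * v)
    - ∑ k ∈ Finset.Icc 1 m, g k * ∑ h ∈ Finset.Icc q (q + ((2 * v + 1 : ℕ) : ℤ)),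
        Zf R q q h (2 * v + 1) * Zw R h (q - 2) (2 * k - 1)

theorem sum_swap_gk {ι : Type*} (g : ℕ → A) (m : ℕ) (I : Finset ι) (F : ι → A) (G : ι → ℕ → A) :
    ∑ h ∈ I, F h * ∑ k ∈ Finset.Icc 1 m, g k * G h k
      = ∑ k ∈ Finset.Icc 1 m, g k * ∑ h ∈ I, F h * G h k := by
  calc ∑ h ∈ I, F h * ∑ k ∈ Finset.Icc 1 m, g k * G h k
      = ∑ h ∈ I, ∑ k ∈ Finset.Icc 1 m, F h * (g k * G h k) :=
        Finset.sum_congr rfl fun h _ => Finset.mul_sum _ _ _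
    _ = ∑ k ∈ Finset.Icc 1 m, ∑ h ∈ I, F h * (g k * G h k) := Finset.sum_comm
    _ = ∑ k ∈ Finset.Icc 1 m, g k * ∑ h ∈ I, F h * G h k := by
        apply Finset.sum_congr rfl
        intro k _
        rw [Finset.mul_sum]
        exact Finset.sum_congr rfl fun h _ => by ring

theorem zf_diag_not_even (R : ℤ → A) (q : ℤ) {t : ℕ} (ht : ¬ Even t) :
    Zf R q q q t = 0 := by
  apply Zf_parity
  intro hcon
  rw [sub_self, zero_add, Int.even_coe_nat] at hcon
  exact ht hcon

theorem zf_diag_odd (R : ℤ → A) (q : ℤ) (n : ℕ) : Zf R q q q (2 * n + 1) = 0 :=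
  zf_diag_not_even R q (by rw [Nat.even_iff]; omega)

/-- `Γ_{2w}(q+1)` in terms of level-`q` data (master-free). -/
theorem GpBm (R : ℤ → A) (g : ℕ → A) (m : ℕ) (q : ℤ) (hq : 0 ≤ q) (w : ℕ) (hw : 1 ≤ w) :
    Gam R g m w (q + 1) = R q * Zf R q q q (2 * w)
      - ∑ k ∈ Finset.Icc 1 m, g k * ∑ h ∈ Finset.Icc q (q + ((2 * w : ℕ) : ℤ)),
          Zf R q q h (2 * w) * Zw R h (q - 1) (2 * k - 1) := by
  simp only [Gam, if_neg (by omega : ¬ w = 0), Zwp_eq_Zf]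
  rw [if_neg (by omega : ¬ q + 1 = 0)]
  simp only [show q + 1 - 1 = q from by ring, show q + 1 - 2 = q - 1 from by ring, add_zero]
  simp only [show ∀ j : ℤ, q + 1 + 2 * j - 1 = q + 2 * j from fun j => by ring]
  have hsplit : ∑ k ∈ Finset.Icc 1 m, g k * ∑ h ∈ Finset.Icc q (q + ((2 * w : ℕ) : ℤ)),
        Zf R q q h (2 * w) * Zw R h (q - 1) (2 * k - 1)
      = Zf R q q q (2 * w) * Vp R g m q (q - 1)
        + ∑ k ∈ Finset.Icc 1 m, g k * ∑ h ∈ Finset.Icc (q + 1) (q + ((2 * w : ℕ) : ℤ)),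
            Zf R q q h (2 * w) * Zw R h (q - 1) (2 * k - 1) := by
    have hper : ∀ k ∈ Finset.Icc 1 m,
        g k * ∑ h ∈ Finset.Icc q (q + ((2 * w : ℕ) : ℤ)),
            Zf R q q h (2 * w) * Zw R h (q - 1) (2 * k - 1)
        = Zf R q q q (2 * w) * (g k * Zw R q (q - 1) (2 * k - 1))
          + g k * ∑ h ∈ Finset.Icc (q + 1) (q + ((2 * w : ℕ) : ℤ)),
              Zf R q q h (2 * w) * Zw R h (q - 1) (2 * k - 1) := by
      intro k _
      rw [sum_Icc_bot (by omega) (fun h => Zf R q q h (2 * w) * Zw R h (q - 1) (2 * k - 1))]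
      ring
    rw [Finset.sum_congr rfl hper, Finset.sum_add_distrib]
    congr 1
    rw [Vp, Finset.mul_sum]
  rw [hsplit]
  have hjh : ∑ j ∈ Finset.Icc 1 w, Zf R q q (q + 2 * (j : ℤ)) (2 * w) * Vp R g m (q + 2 * (j : ℤ)) (q - 1)
      = ∑ k ∈ Finset.Icc 1 m, g k * ∑ h ∈ Finset.Icc (q + 1) (q + ((2 * w : ℕ) : ℤ)),
          Zf R q q h (2 * w) * Zw R h (q - 1) (2 * k - 1) := by
    rw [JHeven R q w (fun h => Vp R g m h (q - 1))]
    simp only [Vp]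
    exact sum_swap_gk g m _ _ _
  rw [← hjh]
  ring

/-- The `w = 0` boundary value via the master equation. -/
theorem B0 (R : ℤ → A) (g : ℕ → A) (m : ℕ) (hmaster : MasterEq R g m) (q : ℤ)
    (hq : 0 ≤ q + 1) :
    ∑ k ∈ Finset.Icc 1 m, g k * ∑ h ∈ Finset.Icc (q + 1) (q + 1),
        Zf R (q + 1) (q + 1) h 0 * Zw R h q (2 * k - 1) = R (q + 1) - 1 := by
  have hm : R (q + 1) = 1 + Vp R g m (q + 1) q := by
    have := hmaster.2 (q + 1) hq
    rwa [show q + 1 - 1 = q from by ring] at this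
  have h1 : Zf R (q + 1) (q + 1) (q + 1) 0 = 1 := by
    rw [Zf_zero, if_pos ⟨rfl, le_refl _⟩]
  rw [Finset.Icc_self]
  have hper : ∀ k ∈ Finset.Icc 1 m,
      g k * ∑ h ∈ {q + 1}, Zf R (q + 1) (q + 1) h 0 * Zw R h q (2 * k - 1)
      = g k * Zw R (q + 1) q (2 * k - 1) := by
    intro k _
    rw [Finset.sum_singleton, h1, one_mul]
  rw [Finset.sum_congr rfl hper, hm, Vp]
  ring

/-- The `M2` identity. -/
theorem M2 (R : ℤ → A) (q : ℤ) (v K : ℕ) :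
    ∑ h ∈ Finset.Icc q (q + ((2 * v + 2 : ℕ) : ℤ)), Zf R q q h (2 * v + 2) * Zw R h (q - 1) (2 * K + 1)
      = ∑ h ∈ Finset.Icc q (q + ((2 * v + 2 : ℕ) : ℤ)),
          Zf R q q h (2 * v + 1) * (Zw R h (q - 2) (2 * K + 1) + R q * Zw R h q (2 * K + 1)) := by
  have hs := SPL R q (q - 1) (2 * v + 1) (2 * K + 1) (2 * v + 2) (by omega)
  rw [zf_diag_odd, zero_mul, sub_zero] at hs
  rw [show 2 * v + 1 + 1 = 2 * v + 2 from by omega, show 2 * K + 1 + 1 = 2 * K + 2 from by omega]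
    at hs
  rw [hs]
  apply Finset.sum_congr rfl
  intro h _
  rw [show 2 * K + 2 = (2 * K + 1) + 1 from by omega, Zw_succ_right R h (q - 1) (2 * K + 1)]
  rw [show q - 1 + 1 = q from by ring, show q - 1 - 1 = q - 2 from by ring]
  ring

/-- Decomposition of `Cal` via last visit to level `q`. -/
theorem CalDec (R : ℤ → A) (q : ℤ) (v : ℕ) (X : ℤ → A) :
    ∑ h ∈ Finset.Icc q (q + ((2 * v + 1 : ℕ) : ℤ)), Zf R q q h (2 * v + 1) * X h
      = ∑ r ∈ Finset.range (v + 1), Zf R q q q (2 * r)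
          * ∑ h ∈ Finset.Icc (q + 1) (q + 1 + ((2 * (v - r) : ℕ) : ℤ)),
              Zf R (q + 1) (q + 1) h (2 * (v - r)) * X h := by
  rw [sum_Icc_zero_bot (by omega) _ (by rw [zf_diag_odd, zero_mul])]
  have hper : ∀ h ∈ Finset.Icc (q + 1) (q + ((2 * v + 1 : ℕ) : ℤ)),
      Zf R q q h (2 * v + 1) * X h
      = ∑ t ∈ Finset.range (2 * v + 1),
          Zf R q q q t * (Zf R (q + 1) (q + 1) h (2 * v - t) * X h) := by
    intro h hh
    simp only [Finset.mem_Icc] at hh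
    rw [Zf_floor_raise R q (2 * v + 1) h (by omega) q]
    rw [Zf_of_start_lt R (c := q + 1) h (2 * v + 1) (by omega), zero_add]
    rw [Finset.sum_mul]
    apply Finset.sum_congr rfl
    intro t _
    simp only [Nat.add_sub_cancel]
    ring
  rw [Finset.sum_congr rfl hper]
  rw [Finset.sum_comm]
  have hpull : ∀ t ∈ Finset.range (2 * v + 1),
      ∑ h ∈ Finset.Icc (q + 1) (q + ((2 * v + 1 : ℕ) : ℤ)),
          Zf R q q q t * (Zf R (q + 1) (q + 1) h (2 * v - t) * X h)
      = Zf R q q q t * ∑ h ∈ Finset.Icc (q + 1) (q + ((2 * v + 1 : ℕ) : ℤ)),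
          Zf R (q + 1) (q + 1) h (2 * v - t) * X h := by
    intro t _
    rw [Finset.mul_sum]
  rw [Finset.sum_congr rfl hpull]
  rw [sum_even_odd_vanish' _ (fun t ht => by
    rw [zf_diag_not_even R q ht, zero_mul]) v]
  apply Finset.sum_congr rfl
  intro r hr
  simp only [Finset.mem_range] at hr
  rw [show 2 * v - 2 * r = 2 * (v - r) from by omega]
  congr 1
  rw [show q + ((2 * v + 1 : ℕ) : ℤ) = (q + 1) + ((2 * v : ℕ) : ℤ) from by push_cast; ring]
  exact sum_Zf_ext R (q + 1) (2 * (v - r)) (2 * v) (2 * (v - r)) (by omega) (le_refl _) X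

end Stmt9Aux
namespace Stmt9Aux

variable {A : Type*} [CommRing A]

/-- The key identity `S⋆`. -/
theorem Sstar (R : ℤ → A) (g : ℕ → A) (m : ℕ) (hmaster : MasterEq R g m) (q : ℤ)
    (hq : 0 ≤ q) (v : ℕ) :
    Zf R q q q (2 * v + 2) = Zf R q q q (2 * v)
      + (∑ k ∈ Finset.Icc 1 m, g k * ∑ h ∈ Finset.Icc q (q + ((2 * v + 1 : ℕ) : ℤ)),
          Zf R q q h (2 * v + 1) * Zw R h q (2 * k - 1))
      + ∑ a ∈ Finset.range v, Zf R q q q (2 * a) * Gam R g m (v - a) (q + 2) := by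
  have hCal : (∑ k ∈ Finset.Icc 1 m, g k * ∑ h ∈ Finset.Icc q (q + ((2 * v + 1 : ℕ) : ℤ)),
        Zf R q q h (2 * v + 1) * Zw R h q (2 * k - 1))
      = ∑ r ∈ Finset.range (v + 1), Zf R q q q (2 * r)
          * ∑ k ∈ Finset.Icc 1 m, g k * ∑ h ∈ Finset.Icc (q + 1) (q + 1 + ((2 * (v - r) : ℕ) : ℤ)),
              Zf R (q + 1) (q + 1) h (2 * (v - r)) * Zw R h q (2 * k - 1) := by
    have hper : ∀ k ∈ Finset.Icc 1 m,
        g k * ∑ h ∈ Finset.Icc q (q + ((2 * v + 1 : ℕ) : ℤ)),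
            Zf R q q h (2 * v + 1) * Zw R h q (2 * k - 1)
        = g k * ∑ r ∈ Finset.range (v + 1), Zf R q q q (2 * r)
            * ∑ h ∈ Finset.Icc (q + 1) (q + 1 + ((2 * (v - r) : ℕ) : ℤ)),
                Zf R (q + 1) (q + 1) h (2 * (v - r)) * Zw R h q (2 * k - 1) := by
      intro k _
      rw [CalDec R q v (fun h => Zw R h q (2 * k - 1))]
    rw [Finset.sum_congr rfl hper]
    exact (sum_swap_gk g m (Finset.range (v + 1)) _ _).symm
  have hB0 : Zf R q q q (2 * v) * (∑ k ∈ Finset.Icc 1 m, g k *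
        ∑ h ∈ Finset.Icc (q + 1) (q + 1 + ((2 * (v - v) : ℕ) : ℤ)),
          Zf R (q + 1) (q + 1) h (2 * (v - v)) * Zw R h q (2 * k - 1))
      = Zf R q q q (2 * v) * (R (q + 1) - 1) := by
    congr 1
    simp only [Nat.sub_self, Nat.mul_zero, Nat.cast_zero, add_zero]
    exact B0 R g m hmaster q (by omega)
  have hGp : ∀ r ∈ Finset.range v,
      Zf R q q q (2 * r) * (∑ k ∈ Finset.Icc 1 m, g k *
          ∑ h ∈ Finset.Icc (q + 1) (q + 1 + ((2 * (v - r) : ℕ) : ℤ)),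
            Zf R (q + 1) (q + 1) h (2 * (v - r)) * Zw R h q (2 * k - 1))
      = Zf R q q q (2 * r) * (R (q + 1) * Zf R (q + 1) (q + 1) (q + 1) (2 * (v - r))
          - Gam R g m (v - r) (q + 2)) := by
    intro r hr
    simp only [Finset.mem_range] at hr
    congr 1
    have hg := GpBm R g m (q + 1) (by omega) (v - r) (by omega)
    rw [show q + 1 + 1 = q + 2 from by ring, show q + 1 - 1 = q from by ring] at hg
    rw [hg]
    ring
  have hLR : Zf R q q q (2 * v + 2) = R (q + 1) * ∑ r ∈ Finset.range (v + 1),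
      Zf R q q q (2 * r) * Zf R (q + 1) (q + 1) (q + 1) (2 * (v - r)) := by
    rw [show 2 * v + 2 = (2 * v + 1) + 1 from by omega, Zf_last_return R q (2 * v + 1)]
    congr 1
    simp only [Nat.add_sub_cancel]
    rw [sum_even_odd_vanish' _ (fun t ht => by rw [zf_diag_not_even R q ht, zero_mul]) v]
    apply Finset.sum_congr rfl
    intro r hr
    simp only [Finset.mem_range] at hr
    rw [show 2 * v - 2 * r = 2 * (v - r) from by omega]
  have hone : Zf R (q + 1) (q + 1) (q + 1) (2 * (v - v)) = 1 := by
    rw [Nat.sub_self, Nat.mul_zero, Zf_zero, if_pos ⟨rfl, le_refl _⟩]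
  rw [hCal, hLR]
  rw [Finset.sum_range_succ, Finset.sum_range_succ, hB0, hone, mul_one]
  rw [Finset.sum_congr rfl hGp]
  have hdist : ∑ r ∈ Finset.range v, Zf R q q q (2 * r)
        * (R (q + 1) * Zf R (q + 1) (q + 1) (q + 1) (2 * (v - r)) - Gam R g m (v - r) (q + 2))
      = R (q + 1) * (∑ r ∈ Finset.range v,
          Zf R q q q (2 * r) * Zf R (q + 1) (q + 1) (q + 1) (2 * (v - r)))
        - ∑ r ∈ Finset.range v, Zf R q q q (2 * r) * Gam R g m (v - r) (q + 2) := by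
    rw [Finset.mul_sum, ← Finset.sum_sub_distrib]
    exact Finset.sum_congr rfl fun r _ => by ring
  rw [hdist]
  ring

/-- Evaluation of `C_v(q)`. -/
theorem Ceval (R : ℤ → A) (g : ℕ → A) (m : ℕ) (hmaster : MasterEq R g m) (q : ℤ)
    (hq : 0 ≤ q) (v : ℕ) :
    Cq R g m q v = Gam R g m (v + 1) (q + 1)
      - R q * ∑ a ∈ Finset.range v, Zf R q q q (2 * a) * Gam R g m (v - a) (q + 2) := by
  have hGp := GpBm R g m q hq (v + 1) (by omega)
  rw [show 2 * (v + 1) = 2 * v + 2 from by omega] at hGp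
  have hM : ∀ k ∈ Finset.Icc 1 m,
      g k * ∑ h ∈ Finset.Icc q (q + ((2 * v + 2 : ℕ) : ℤ)),
          Zf R q q h (2 * v + 2) * Zw R h (q - 1) (2 * k - 1)
      = g k * ∑ h ∈ Finset.Icc q (q + ((2 * v + 1 : ℕ) : ℤ)),
            Zf R q q h (2 * v + 1) * Zw R h (q - 2) (2 * k - 1)
        + R q * (g k * ∑ h ∈ Finset.Icc q (q + ((2 * v + 1 : ℕ) : ℤ)),
            Zf R q q h (2 * v + 1) * Zw R h q (2 * k - 1)) := by
    intro k hk
    simp only [Finset.mem_Icc] at hk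
    obtain ⟨K, rfl⟩ : ∃ K, k = K + 1 := ⟨k - 1, by omega⟩
    rw [show 2 * (K + 1) - 1 = 2 * K + 1 from by omega]
    rw [M2 R q v K]
    have hsplit : ∑ h ∈ Finset.Icc q (q + ((2 * v + 2 : ℕ) : ℤ)),
          Zf R q q h (2 * v + 1) * (Zw R h (q - 2) (2 * K + 1) + R q * Zw R h q (2 * K + 1))
        = (∑ h ∈ Finset.Icc q (q + ((2 * v + 2 : ℕ) : ℤ)),
            Zf R q q h (2 * v + 1) * Zw R h (q - 2) (2 * K + 1))
          + ∑ h ∈ Finset.Icc q (q + ((2 * v + 2 : ℕ) : ℤ)),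
            Zf R q q h (2 * v + 1) * (R q * Zw R h q (2 * K + 1)) := by
      rw [← Finset.sum_add_distrib]
      exact Finset.sum_congr rfl fun h _ => by ring
    rw [hsplit]
    rw [sum_Zf_ext R q (2 * v + 1) (2 * v + 2) (2 * v + 1) (by omega) (le_refl _)
      (fun h => Zw R h (q - 2) (2 * K + 1))]
    rw [sum_Zf_ext R q (2 * v + 1) (2 * v + 2) (2 * v + 1) (by omega) (le_refl _)
      (fun h => R q * Zw R h q (2 * K + 1))]
    have hpull : ∑ h ∈ Finset.Icc q (q + ((2 * v + 1 : ℕ) : ℤ)),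
          Zf R q q h (2 * v + 1) * (R q * Zw R h q (2 * K + 1))
        = R q * ∑ h ∈ Finset.Icc q (q + ((2 * v + 1 : ℕ) : ℤ)),
            Zf R q q h (2 * v + 1) * Zw R h q (2 * K + 1) := by
      rw [Finset.mul_sum]
      exact Finset.sum_congr rfl fun h _ => by ring
    rw [hpull]
    ring
  rw [Finset.sum_congr rfl hM, Finset.sum_add_distrib] at hGp
  have hpull2 : ∑ k ∈ Finset.Icc 1 m, R q * (g k * ∑ h ∈ Finset.Icc q (q + ((2 * v + 1 : ℕ) : ℤ)),
        Zf R q q h (2 * v + 1) * Zw R h q (2 * k - 1))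
      = R q * ∑ k ∈ Finset.Icc 1 m, g k * ∑ h ∈ Finset.Icc q (q + ((2 * v + 1 : ℕ) : ℤ)),
        Zf R q q h (2 * v + 1) * Zw R h q (2 * k - 1) := by
    rw [Finset.mul_sum]
  rw [hpull2] at hGp
  have hS := Sstar R g m hmaster q hq v
  rw [Cq]
  linear_combination -hGp - R q * hS

/-- `Γ₀(q) = 1` under the master equation. -/
theorem G0 (R : ℤ → A) (g : ℕ → A) (m : ℕ) (hmaster : MasterEq R g m) (q : ℤ) (hq : 0 ≤ q) :
    R (q - 1) - Vp R g m (q - 1) (q - 2) + (if q = 0 then 1 else 0) = 1 := by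
  by_cases h0 : q = 0
  · subst h0
    rw [if_pos rfl]
    have hR : R (0 - 1 : ℤ) = 0 := hmaster.1 _ (by norm_num)
    have hV : Vp R g m (0 - 1 : ℤ) (0 - 2) = 0 := by
      rw [Vp]
      apply Finset.sum_eq_zero
      intro k _
      rw [Zw_neg R hmaster.1 _ (by norm_num) (by norm_num), mul_zero]
    rw [hR, hV]
    ring
  · rw [if_neg h0]
    have hm := hmaster.2 (q - 1) (by omega)
    rw [show q - 1 - 1 = q - 2 from by ring] at hm
    rw [hm]
    ring

end Stmt9Aux
namespace Stmt9Aux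

variable {A : Type*} [CommRing A]

/-- `Γ_{2i}(q)` as a convolution of floor-`(q-1)` loops against `C`. -/
theorem GamC (R : ℤ → A) (g : ℕ → A) (m : ℕ) (hmaster : MasterEq R g m) (q : ℤ)
    (hq : 0 ≤ q) (i : ℕ) (hi : 1 ≤ i) :
    Gam R g m i q
      = ∑ u ∈ Finset.range i, Zf R (q - 1) (q - 1) (q - 1) (2 * u) * Cq R g m q (i - 1 - u) := by
  simp only [Gam, if_neg (by omega : ¬ i = 0), Zwp_eq_Zf]
  rw [G0 R g m hmaster q hq, mul_one]
  have hT1 : Zf R (q - 1) (q - 1) (q - 1) (2 * i)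
      = ∑ u ∈ Finset.range i, Zf R (q - 1) (q - 1) (q - 1) (2 * u)
          * (R q * Zf R q q q (2 * (i - 1 - u))) := by
    rw [show 2 * i = (2 * (i - 1) + 1) + 1 from by omega, Zf_last_return R (q - 1) (2 * (i - 1) + 1)]
    rw [show q - 1 + 1 = q from by ring]
    simp only [Nat.add_sub_cancel]
    rw [sum_even_odd_vanish' _ (fun t ht => by rw [zf_diag_not_even R (q - 1) ht, zero_mul]) (i - 1)]
    rw [show i - 1 + 1 = i from by omega]
    rw [Finset.mul_sum]
    apply Finset.sum_congr rfl
    intro u hu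
    simp only [Finset.mem_range] at hu
    rw [show 2 * (i - 1) - 2 * u = 2 * (i - 1 - u) from by omega]
    ring
  have hper : ∀ j ∈ Finset.Icc 1 i,
      Zf R (q - 1) (q - 1) (q - 1 + 2 * (j : ℤ)) (2 * i) * Vp R g m (q + 2 * (j : ℤ) - 1) (q - 2)
      = ∑ t ∈ Finset.range (2 * i), Zf R (q - 1) (q - 1) (q - 1) t
          * (Zf R q q (q + 2 * (j : ℤ) - 1) (2 * i - 1 - t) * Vp R g m (q + 2 * (j : ℤ) - 1) (q - 2)) := by
    intro j hj
    simp only [Finset.mem_Icc] at hj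
    rw [show q - 1 + 2 * (j : ℤ) = q + 2 * (j : ℤ) - 1 from by ring]
    rw [Zf_floor_raise R (q - 1) (2 * i) (q + 2 * (j : ℤ) - 1) (by omega) (q - 1)]
    rw [show q - 1 + 1 = q from by ring]
    rw [Zf_of_start_lt R (c := q) (q + 2 * (j : ℤ) - 1) (2 * i) (by omega), zero_add]
    rw [Finset.sum_mul]
    exact Finset.sum_congr rfl fun t _ => by ring
  rw [Finset.sum_congr rfl hper, Finset.sum_comm]
  have hpull : ∀ t ∈ Finset.range (2 * i),
      ∑ j ∈ Finset.Icc 1 i, Zf R (q - 1) (q - 1) (q - 1) t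
          * (Zf R q q (q + 2 * (j : ℤ) - 1) (2 * i - 1 - t) * Vp R g m (q + 2 * (j : ℤ) - 1) (q - 2))
      = Zf R (q - 1) (q - 1) (q - 1) t * ∑ j ∈ Finset.Icc 1 i,
          Zf R q q (q + 2 * (j : ℤ) - 1) (2 * i - 1 - t) * Vp R g m (q + 2 * (j : ℤ) - 1) (q - 2) :=
    fun t _ => by rw [Finset.mul_sum]
  rw [Finset.sum_congr rfl hpull]
  rw [sum_even_odd_vanish _ (fun t ht => by rw [zf_diag_not_even R (q - 1) ht, zero_mul]) i]
  have hInner : ∀ u ∈ Finset.range i,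
      Zf R (q - 1) (q - 1) (q - 1) (2 * u) * ∑ j ∈ Finset.Icc 1 i,
          Zf R q q (q + 2 * (j : ℤ) - 1) (2 * i - 1 - 2 * u) * Vp R g m (q + 2 * (j : ℤ) - 1) (q - 2)
      = Zf R (q - 1) (q - 1) (q - 1) (2 * u)
          * ∑ k ∈ Finset.Icc 1 m, g k * ∑ h ∈ Finset.Icc q (q + ((2 * (i - 1 - u) + 1 : ℕ) : ℤ)),
              Zf R q q h (2 * (i - 1 - u) + 1) * Zw R h (q - 2) (2 * k - 1) := by
    intro u hu
    simp only [Finset.mem_range] at hu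
    congr 1
    rw [show 2 * i - 1 - 2 * u = 2 * (i - 1 - u) + 1 from by omega]
    have hshrink : ∑ j ∈ Finset.Icc 1 i,
        Zf R q q (q + 2 * (j : ℤ) - 1) (2 * (i - 1 - u) + 1) * Vp R g m (q + 2 * (j : ℤ) - 1) (q - 2)
        = ∑ j ∈ Finset.Icc 1 ((i - 1 - u) + 1),
            Zf R q q (q + 2 * (j : ℤ) - 1) (2 * (i - 1 - u) + 1) * Vp R g m (q + 2 * (j : ℤ) - 1) (q - 2) := by
      apply (Finset.sum_subset _ _).symm
      · intro x hx
        simp only [Finset.mem_Icc] at hx ⊢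
        omega
      · intro x hx hx'
        simp only [Finset.mem_Icc] at hx hx'
        rw [Zf_of_gt R q (by push_cast; omega), zero_mul]
    rw [hshrink]
    rw [JHodd R q (i - 1 - u) (fun h => Vp R g m h (q - 2))]
    simp only [Vp]
    exact sum_swap_gk g m _ _ _
  rw [Finset.sum_congr rfl hInner, hT1, ← Finset.sum_sub_distrib]
  apply Finset.sum_congr rfl
  intro u _
  rw [Cq]
  ring

theorem gam_const_of (R : ℤ → A) (g : ℕ → A) (m : ℕ) (w' : ℕ)
    (hstep : ∀ n : ℤ, 0 ≤ n → Gam R g m w' (n + 1) = Gam R g m w' n) :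
    ∀ p : ℤ, 0 ≤ p → Gam R g m w' p = Gam R g m w' 0 :=
  Int.le_induction rfl (fun p hp ih => by rw [hstep p hp, ih])

theorem conserve (R : ℤ → A) (g : ℕ → A) (m : ℕ) (hmaster : MasterEq R g m) :
    ∀ w : ℕ, 1 ≤ w → ∀ n : ℤ, 0 ≤ n → Gam R g m w (n + 1) = Gam R g m w n := by
  intro w
  induction w using Nat.strong_induction_on with
  | _ w IH =>
  intro hw n hn
  have hconst : ∀ w', 1 ≤ w' → w' < w → ∀ p : ℤ, 0 ≤ p → Gam R g m w' p = Gam R g m w' n := by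
    intro w' h1 h2 p hp
    rw [gam_const_of R g m w' (fun n' hn' => IH w' h2 h1 n' hn') p hp,
      gam_const_of R g m w' (fun n' hn' => IH w' h2 h1 n' hn') n hn]
  obtain ⟨W, rfl⟩ : ∃ W, w = W + 1 := ⟨w - 1, by omega⟩
  have hGamCn := GamC R g m hmaster n hn (W + 1) (by omega)
  simp only [Nat.add_sub_cancel] at hGamCn
  rw [Finset.sum_range_succ'] at hGamCn
  rw [Nat.sub_zero] at hGamCn
  have hP0 : Zf R (n - 1) (n - 1) (n - 1) (2 * 0) = 1 := by
    rw [Nat.mul_zero, Zf_zero, if_pos ⟨rfl, le_refl _⟩]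
  rw [hP0, one_mul] at hGamCn
  have hTop : Cq R g m n W = Gam R g m (W + 1) (n + 1)
      - R n * ∑ a ∈ Finset.range W, Zf R n n n (2 * a) * Gam R g m (W - a) n := by
    rw [Ceval R g m hmaster n hn W]
    congr 2
    apply Finset.sum_congr rfl
    intro a ha
    simp only [Finset.mem_range] at ha
    rw [hconst (W - a) (by omega) (by omega) (n + 2) (by omega)]
  have hP : ∀ u : ℕ, Zf R (n - 1) (n - 1) (n - 1) (2 * (u + 1))
      = R n * ∑ t ∈ Finset.range (u + 1),
          Zf R (n - 1) (n - 1) (n - 1) (2 * t) * Zf R n n n (2 * (u - t)) := by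
    intro u
    rw [show 2 * (u + 1) = (2 * u + 1) + 1 from by omega, Zf_last_return R (n - 1) (2 * u + 1)]
    rw [show n - 1 + 1 = n from by ring]
    congr 1
    simp only [Nat.add_sub_cancel]
    rw [sum_even_odd_vanish' _ (fun t ht => by rw [zf_diag_not_even R (n - 1) ht, zero_mul]) u]
    apply Finset.sum_congr rfl
    intro t ht
    simp only [Finset.mem_range] at ht
    rw [show 2 * u - 2 * t = 2 * (u - t) from by omega]
  have hrem : ∑ u ∈ Finset.range W, Zf R (n - 1) (n - 1) (n - 1) (2 * (u + 1)) * Cq R g m n (W - (u + 1))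
      = R n * ∑ a ∈ Finset.range W, Zf R n n n (2 * a) * Gam R g m (W - a) n := by
    have step1 : ∑ u ∈ Finset.range W,
          Zf R (n - 1) (n - 1) (n - 1) (2 * (u + 1)) * Cq R g m n (W - (u + 1))
        = ∑ u ∈ Finset.range W, ∑ t ∈ Finset.range (u + 1),
            R n * (Zf R (n - 1) (n - 1) (n - 1) (2 * t)
              * (Zf R n n n (2 * (u - t)) * Cq R g m n (W - t - (u - t) - 1))) := by
      apply Finset.sum_congr rfl
      intro u hu
      simp only [Finset.mem_range] at hu
      rw [hP u, Finset.mul_sum, Finset.sum_mul]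
      apply Finset.sum_congr rfl
      intro t ht
      simp only [Finset.mem_range] at ht
      rw [show W - t - (u - t) - 1 = W - (u + 1) from by omega]
      ring
    rw [step1, sum_triangle (fun t b => R n * (Zf R (n - 1) (n - 1) (n - 1) (2 * t)
      * (Zf R n n n (2 * b) * Cq R g m n (W - t - b - 1))))]
    have step3 : ∀ b ∈ Finset.range W,
        ∑ t ∈ Finset.range (W - b), R n * (Zf R (n - 1) (n - 1) (n - 1) (2 * t)
            * (Zf R n n n (2 * b) * Cq R g m n (W - t - b - 1)))
        = R n * (Zf R n n n (2 * b) * Gam R g m (W - b) n) := by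
      intro b hb
      simp only [Finset.mem_range] at hb
      have inner := (GamC R g m hmaster n hn (W - b) (by omega)).symm
      calc ∑ t ∈ Finset.range (W - b), R n * (Zf R (n - 1) (n - 1) (n - 1) (2 * t)
              * (Zf R n n n (2 * b) * Cq R g m n (W - t - b - 1)))
          = R n * (Zf R n n n (2 * b) * ∑ t ∈ Finset.range (W - b),
              Zf R (n - 1) (n - 1) (n - 1) (2 * t) * Cq R g m n (W - b - 1 - t)) := by
            rw [Finset.mul_sum, Finset.mul_sum]
            apply Finset.sum_congr rfl
            intro t ht
            simp only [Finset.mem_range] at ht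
            rw [show W - b - 1 - t = W - t - b - 1 from by omega]
            ring
        _ = R n * (Zf R n n n (2 * b) * Gam R g m (W - b) n) := by rw [inner]
    rw [Finset.sum_congr rfl step3, Finset.mul_sum]
  rw [hGamCn, hTop, hrem]
  ring

end Stmt9Aux
/-- conservation of the quantities `Γ_{2j}` under the master equation. -/
theorem stmt_9 {A : Type*} [CommRing A] (R : ℤ → A) (m : ℕ) (hm : 1 ≤ m) (g : ℕ → A)
    (hmaster : MasterEq R g m) (j : ℕ) (hj : 1 ≤ j) (n : ℤ) (hn : 0 ≤ n) :
    Gam R g m j (n + 1) = Gam R g m j n := by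
  exact Stmt9Aux.conserve R g m hmaster j hj n hn
end

section
/- Value of the conserved quantities at n = 0: let A be a commutative ring, R : ℤ → A a family of weights with R_i = 0 for all i < 0, m ≥ 1 and g_1, …, g_m ∈ A. Then for every natural number i ≥ 1, Γ_{2i}(0) = Z_{0,−1}(2i−1). -/
open Finset

variable {A : Type*} [CommRing A]

lemma weight_zero_of_low (R : ℤ → A) (hR : ∀ i : ℤ, i < 0 → R i = 0) :
    ∀ (s : List Bool) (a : ℤ), -1 ≤ a → walkEnd a s ≤ -2 → walkWeight R a s = 0 := by
  intro s
  induction s with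
  | nil => intro a ha hend; simp only [walkEnd] at hend; omega
  | cons b t ih =>
    intro a ha hend
    cases b with
    | true =>
      simpa [walkWeight] using ih (a + 1) (by omega) (by simpa [walkEnd] using hend)
    | false =>
      by_cases h : a = -1
      · simp [walkWeight, h, hR (-1) (by norm_num)]
      · simp [walkWeight, ih (a - 1) (by omega) (by simpa [walkEnd] using hend)]

lemma weight_zero_of_notAbove (R : ℤ → A) (hR : ∀ i : ℤ, i < 0 → R i = 0) :
    ∀ (s : List Bool) (a : ℤ), -1 ≤ a → walkAbove (-1) a s = false → walkWeight R a s = 0 := by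
  intro s
  induction s with
  | nil =>
    intro a ha h
    simp only [walkAbove, decide_eq_false_iff_not] at h
    omega
  | cons b t ih =>
    intro a ha h
    cases b with
    | true =>
      simp only [walkAbove, decide_eq_true ha, Bool.true_and] at h
      simpa [walkWeight] using ih (a + 1) (by omega) h
    | false =>
      by_cases h' : a = -1
      · simp [walkWeight, h', hR (-1) (by norm_num)]
      · simp only [walkAbove, decide_eq_true ha, Bool.true_and] at h
        simp [walkWeight, ih (a - 1) (by omega) h]

lemma walkAbove_neg_two (c : ℤ) (l : List Bool) : walkAbove (-1) (-2) l = false := by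
  cases l with
  | nil => simp [walkAbove]
  | cons b t => cases b <;> simp [walkAbove]

lemma sum_pi_succ {β : Type*} [AddCommMonoid β] (n : ℕ) (f : (Fin (n + 1) → Bool) → β) :
    (∑ s : Fin (n + 1) → Bool, f s) =
      ∑ b : Bool, ∑ s : Fin n → Bool, f (Fin.cons b s) := by
  rw [Fintype.sum_equiv (Fin.consEquiv (fun _ : Fin (n + 1) => Bool)).symm f (fun p => f (Fin.cons p.1 p.2))
    (fun s => by congr 1; exact (Fin.cons_self_tail s).symm)]
  rw [Fintype.sum_prod_type]

lemma ofFn_cons (n : ℕ) (b : Bool) (s : Fin n → Bool) :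
    List.ofFn (Fin.cons b s) = b :: List.ofFn s := by
  simp [List.ofFn_succ]

lemma Zw_to_neg_two (R : ℤ → A) (hR : ∀ i : ℤ, i < 0 → R i = 0) (a : ℤ) (ha : -1 ≤ a)
    (n : ℕ) : Zw R a (-2) n = 0 := by
  unfold Zw
  apply Finset.sum_eq_zero
  intro s _
  split
  · next h => exact weight_zero_of_low R hR _ a ha (le_of_eq h)
  · rfl

lemma Zwp_eq_Zw (R : ℤ → A) (hR : ∀ i : ℤ, i < 0 → R i = 0) (n : ℕ) :
    Zwp R (-1) (-1) (n + 1) = Zw R 0 (-1) n := by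
  have hZw : Zw R 0 (-1) n =
      ∑ s : Fin n → Bool,
        if walkEnd 0 (List.ofFn s) = -1 ∧ walkAbove (-1) 0 (List.ofFn s) = true then
          walkWeight R 0 (List.ofFn s) else 0 := by
    unfold Zw
    apply Finset.sum_congr rfl
    intro s _
    by_cases h1 : walkEnd 0 (List.ofFn s) = -1
    · by_cases h2 : walkAbove (-1) 0 (List.ofFn s) = true
      · simp [h1, h2]
      · have h2' : walkAbove (-1) 0 (List.ofFn s) = false := by
          simpa using h2
        simp [h1, h2', weight_zero_of_notAbove R hR _ 0 (by norm_num) h2']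
    · simp [h1]
  rw [hZw]
  unfold Zwp
  rw [sum_pi_succ]
  rw [Fintype.sum_bool]
  simp only [ofFn_cons]
  have hfalse :
      (∑ s : Fin n → Bool,
        if walkEnd (-1) (false :: List.ofFn s) = -1 ∧
            walkAbove (-1) (-1) (false :: List.ofFn s) = true then
          walkWeight R (-1) (false :: List.ofFn s) else 0) = 0 := by
    apply Finset.sum_eq_zero
    intro s _
    have : walkAbove (-1) (-1) (false :: List.ofFn s) = false := by
      simp [walkAbove, walkAbove_neg_two (-1) (List.ofFn s)]
    simp [this]
  rw [hfalse, add_zero]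
  apply Finset.sum_congr rfl
  intro s _
  have he : walkEnd (-1) (true :: List.ofFn s) = walkEnd 0 (List.ofFn s) := by
    simp [walkEnd]
  have hw : walkWeight R (-1) (true :: List.ofFn s) = walkWeight R 0 (List.ofFn s) := by
    simp [walkWeight]
  have hab : walkAbove (-1) (-1) (true :: List.ofFn s) = walkAbove (-1) 0 (List.ofFn s) := by
    simp [walkAbove]
  rw [he, hw, hab]

/-- value of the conserved quantities at `n = 0`. -/
theorem stmt_10 {A : Type*} [CommRing A] (R : ℤ → A) (hR : ∀ i : ℤ, i < 0 → R i = 0)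
    (m : ℕ) (hm : 1 ≤ m) (g : ℕ → A) (i : ℕ) (hi : 1 ≤ i) :
    Gam R g m i 0 = Zw R 0 (-1) (2 * i - 1) := by
  have hVp : ∀ a : ℤ, -1 ≤ a → Vp R g m a (-2) = 0 := by
    intro a ha
    unfold Vp
    apply Finset.sum_eq_zero
    intro k _
    rw [Zw_to_neg_two R hR a ha, mul_zero]
  rw [Gam, if_neg (by omega : i ≠ 0)]
  norm_num
  rw [hR (-1) (by norm_num), hVp (-1) (by norm_num)]
  have hsum : (∑ x ∈ Finset.Icc 1 i,
      Zwp R (-1) (-1 + 2 * (x : ℤ)) (2 * i) * Vp R g m (2 * (x : ℤ) - 1) (-2)) = 0 := by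
    apply Finset.sum_eq_zero
    intro j hj
    have hj1 : 1 ≤ j := (Finset.mem_Icc.mp hj).1
    have hj1' : (1 : ℤ) ≤ (j : ℤ) := by exact_mod_cast hj1
    rw [hVp (2 * (j : ℤ) - 1) (by omega), mul_zero]
  rw [hsum, sub_zero]
  have h2i : 2 * i = (2 * i - 1) + 1 := by omega
  have hkey := Zwp_eq_Zw R hR (2 * i - 1)
  rw [← h2i] at hkey
  rw [hkey]
  ring
end

section
/- For all natural numbers i and j, the binomial identity Σ_{ℓ=0}^{i} C(2ℓ, ℓ) · (C(2i−2ℓ, i−ℓ−j) − C(2i−2ℓ, i−ℓ−j−1)) = C(2i+1, i−j) holds, where C(n,p) denotes the binomial coefficient with the convention C(n,p) = 0 for p < 0 or p > n. -/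
open Finset

variable {A : Type*} [CommRing A]

lemma cz_pascal (n : ℕ) (p : ℤ) : Cz (n+1) p = Cz n p + Cz n (p-1) := by
  unfold Cz
  by_cases h : 0 ≤ p
  · by_cases h' : 0 ≤ p - 1
    · simp only [h, h', if_true]
      have hp : p.toNat = (p-1).toNat + 1 := by omega
      rw [hp, Nat.choose_succ_succ']
      push_cast; ring
    · have hp : p = 0 := by omega
      simp [hp]
  · have h' : ¬ 0 ≤ p - 1 := by omega
    simp [h, h', show ¬ (1:ℤ) ≤ p by omega]

lemma cz_pascal2 (n : ℕ) (p : ℤ) :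
    Cz (n+2) p = Cz n p + 2 * Cz n (p-1) + Cz n (p-2) := by
  have h1 := cz_pascal (n+1) p
  have h2 := cz_pascal (n+1) (p-1)
  have h3 := cz_pascal n p
  have h4 := cz_pascal n (p-1)
  have e : p - 1 - 1 = p - 2 := by ring
  rw [e] at h2 h4
  have e2 : n + 1 + 1 = n + 2 := by ring
  rw [e2] at h1
  linarith


lemma cz_one2 (p : ℤ) : Cz 1 p = if p = 0 ∨ p = 1 then 1 else 0 := by
  unfold Cz
  by_cases h : 0 ≤ p
  · rw [if_pos h]
    by_cases h0 : p = 0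
    · subst h0; norm_num
    · by_cases h1 : p = 1
      · subst h1; norm_num
      · rw [if_neg (by tauto), Nat.choose_eq_zero_of_lt (by omega)]; norm_num
  · rw [if_neg h, if_neg (by omega)]

lemma cz_zero (p : ℤ) : Cz 0 p = if p = 0 then 1 else 0 := by
  unfold Cz
  rcases lt_trichotomy p 0 with h|h|h
  · rw [if_neg (by omega), if_neg (by omega)]
  · subst h; simp
  · rw [if_pos (by omega), if_neg (by omega), Nat.choose_eq_zero_of_lt (by omega)]
    simp

def Tbk (i : ℕ) (j : ℤ) : ℤ :=
  if 0 ≤ j then Cz (2*i+1) ((i:ℤ) - j) else -Cz (2*i+1) ((i:ℤ) + j + 1)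

lemma T_rec (i : ℕ) (j : ℤ) :
    Tbk (i+1) j = Tbk i (j-1) + 2 * Tbk i j + Tbk i (j+1) +
      Cz (2*(i+1)) ((i:ℤ)+1) * (Cz 0 (-j) - Cz 0 (-j-1)) := by
  unfold Tbk
  rw [cz_zero, cz_zero]
  split_ifs with h1 h2 h3 h4 h5 h6 h7 h8 h9 h10 h11 h12 h13 h14 h15
  all_goals try (exfalso; omega)
  all_goals push_cast
  -- j ≥ 1
  · rw [show (i:ℤ)-(j-1) = (i:ℤ)+1-j from by ring,
      show (i:ℤ)-j = (i:ℤ)+1-j-1 from by ring,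
      show (i:ℤ)-(j+1) = (i:ℤ)+1-j-2 from by ring,
      show 2*(i+1)+1 = (2*i+1)+2 from by ring, cz_pascal2]
    ring
  -- j = 0
  · have hj : j = 0 := by omega
    subst hj
    have a1 := cz_pascal (2*i+1) ((i:ℤ))
    have a2 := cz_pascal ((2*i+1)+1) ((i:ℤ)+1)
    rw [show (i:ℤ)+1-1 = (i:ℤ) from by ring] at a2
    rw [show 2*(i+1)+1 = ((2*i+1)+1)+1 from by ring,
      show 2*(i+1) = (2*i+1)+1 from by ring,
      show (i:ℤ)+1-0 = (i:ℤ)+1 from by ring,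
      show (i:ℤ)+(0-1)+1 = (i:ℤ) from by ring,
      show (i:ℤ)-0 = (i:ℤ) from by ring,
      show (i:ℤ)-(0+1) = (i:ℤ)-1 from by ring]
    linarith
  -- j = -1
  · have hj : j = -1 := by omega
    subst hj
    have a1 := cz_pascal (2*i+1) ((i:ℤ))
    have a2 := cz_pascal ((2*i+1)+1) ((i:ℤ)+1)
    rw [show (i:ℤ)+1-1 = (i:ℤ) from by ring] at a2
    rw [show 2*(i+1)+1 = ((2*i+1)+1)+1 from by ring,
      show 2*(i+1) = (2*i+1)+1 from by ring,
      show (i:ℤ)+1+(-1)+1 = (i:ℤ)+1 from by ring,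
      show (i:ℤ)+(-1-1)+1 = (i:ℤ)-1 from by ring,
      show (i:ℤ)+(-1)+1 = (i:ℤ) from by ring,
      show (i:ℤ)-(-1+1) = (i:ℤ) from by ring]
    linarith
  -- j ≤ -2
  · rw [show (i:ℤ)+1+j+1 = (i:ℤ)+j+2 from by ring,
      show (i:ℤ)+(j-1)+1 = (i:ℤ)+j+2-2 from by ring,
      show (i:ℤ)+j+1 = (i:ℤ)+j+2-1 from by ring,
      show (i:ℤ)+(j+1)+1 = (i:ℤ)+j+2 from by ring,
      show 2*(i+1)+1 = (2*i+1)+2 from by ring, cz_pascal2]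
    ring

lemma S_eq (i : ℕ) : ∀ j : ℤ,
    ∑ l ∈ Finset.range (i + 1),
        Cz (2 * l) (l : ℤ) *
          (Cz (2 * i - 2 * l) ((i : ℤ) - l - j) - Cz (2 * i - 2 * l) ((i : ℤ) - l - j - 1)) =
      Tbk i j := by
  induction i with
  | zero =>
    intro j
    rw [Finset.sum_range_one]
    norm_num [cz_zero]
    unfold Tbk
    rw [show (2*0+1 : ℕ) = 1 from rfl]
    push_cast
    rw [cz_one2, cz_one2]
    split_ifs <;> omega
  | succ i ih =>
    intro j
    rw [Finset.sum_range_succ]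
    have key : ∀ l ∈ Finset.range (i + 1),
        Cz (2 * l) (l : ℤ) *
          (Cz (2 * (i+1) - 2 * l) ((i+1 : ℕ) - l - j) - Cz (2 * (i+1) - 2 * l) ((i+1 : ℕ) - l - j - 1)) =
        Cz (2 * l) (l : ℤ) *
          (Cz (2 * i - 2 * l) ((i : ℤ) - l - (j-1)) - Cz (2 * i - 2 * l) ((i : ℤ) - l - (j-1) - 1))
        + 2 * (Cz (2 * l) (l : ℤ) *
          (Cz (2 * i - 2 * l) ((i : ℤ) - l - j) - Cz (2 * i - 2 * l) ((i : ℤ) - l - j - 1)))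
        + Cz (2 * l) (l : ℤ) *
          (Cz (2 * i - 2 * l) ((i : ℤ) - l - (j+1)) - Cz (2 * i - 2 * l) ((i : ℤ) - l - (j+1) - 1)) := by
      intro l hl
      have hli : l ≤ i := by
        have := Finset.mem_range.mp hl; omega
      have hn : 2 * (i+1) - 2 * l = (2 * i - 2 * l) + 2 := by omega
      rw [hn]
      push_cast
      have P1 := cz_pascal2 (2*i-2*l) ((i:ℤ)-l-j+1)
      have P2 := cz_pascal2 (2*i-2*l) ((i:ℤ)-l-j)
      ring_nf at P1 P2 ⊢
      linear_combination (Cz (l*2) (l:ℤ)) * P1 - (Cz (l*2) (l:ℤ)) * P2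
    rw [Finset.sum_congr rfl key]
    rw [Finset.sum_add_distrib, Finset.sum_add_distrib, ← Finset.mul_sum, ih (j-1), ih j, ih (j+1),
      T_rec i j]
    have e0 : 2 * (i+1) - 2 * (i+1) = 0 := by omega
    rw [e0]
    push_cast
    rw [show (i:ℤ)+1-(i+1)-j = -j from by ring]

/-- the binomial identity
`Σ_{ℓ=0}^{i} C(2ℓ,ℓ)(C(2i-2ℓ,i-ℓ-j) - C(2i-2ℓ,i-ℓ-j-1)) = C(2i+1,i-j)`. -/
theorem stmt_11 (i j : ℕ) :
    ∑ l ∈ Finset.range (i + 1),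
        Cz (2 * l) (l : ℤ) *
          (Cz (2 * i - 2 * l) ((i : ℤ) - l - j) - Cz (2 * i - 2 * l) ((i : ℤ) - l - j - 1)) =
      Cz (2 * i + 1) ((i : ℤ) - j) := by
  rw [S_eq i (j : ℤ)]
  unfold Tbk
  rw [if_pos (Int.natCast_nonneg j)]
end

section
/- Equivalence of the two formulas for the multi-point functions: let A be a commutative ring, r ∈ A, m ≥ 2 and g_2, …, g_m ∈ A. For each natural number i define γ_{2i} = (C(2i,i) − C(2i,i−1)) r^i − Σ_{k=2}^{m} g_k r^{i+k} Σ_{j=1}^{min(i,k−1)} (C(2i,i−j) − C(2i,i−j−1)) C(2k−1,k+j). Then for every natural number i, Σ_{ℓ=0}^{i} γ_{2i−2ℓ} · C(2ℓ,ℓ) · r^ℓ = C(2i+1,i) r^i − Σ_{k=2}^{m} g_k r^{i+k} Σ_{j=1}^{min(i,k−1)} C(2i+1,i−j) C(2k−1,k+j). -/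
open Finset

variable {A : Type*} [CommRing A]

/-- The multi-point function `γ_{2i}` given by the explicit binomial formula. -/
def gammaVal {A : Type*} [CommRing A] (r : A) (g : ℕ → A) (m : ℕ) (i : ℕ) : A :=
  ((Cz (2 * i) (i : ℤ) - Cz (2 * i) ((i : ℤ) - 1) : ℤ) : A) * r ^ i -
    ∑ k ∈ Finset.Icc 2 m, g k * r ^ (i + k) *
      ∑ j ∈ Finset.Icc 1 (min i (k - 1)),
        ((Cz (2 * i) ((i : ℤ) - j) - Cz (2 * i) ((i : ℤ) - j - 1) : ℤ) : A) *
          ((Cz (2 * k - 1) ((k : ℤ) + j) : ℤ) : A)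


lemma Cz_neg {n : ℕ} {p : ℤ} (h : p < 0) : Cz n p = 0 := by
  simp [Cz, not_le.2 h]

lemma Cz_gt {n : ℕ} {p : ℤ} (h : (n : ℤ) < p) : Cz n p = 0 := by
  unfold Cz
  rw [if_pos (by omega), Nat.choose_eq_zero_of_lt (by omega)]
  simp

lemma Cz_pascal (n : ℕ) (p : ℤ) : Cz (n + 1) p = Cz n p + Cz n (p - 1) := by
  unfold Cz
  rcases lt_trichotomy p 0 with h | h | h
  · rw [if_neg (not_le.2 h), if_neg (not_le.2 h), if_neg (by omega)]; ring
  · subst h; simp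
  · rw [if_pos h.le, if_pos h.le, if_pos (by omega)]
    obtain ⟨k, hk⟩ : ∃ k : ℕ, p = (k : ℤ) + 1 := ⟨(p - 1).toNat, by omega⟩
    subst hk
    have h1 : ((k : ℤ) + 1).toNat = k + 1 := by omega
    have h2 : ((k : ℤ) + 1 - 1).toNat = k := by omega
    rw [h1, h2, Nat.choose_succ_succ]
    push_cast; ring

lemma Cz_pascal2 (n : ℕ) (p : ℤ) :
    Cz (n + 2) p = Cz n p + 2 * Cz n (p - 1) + Cz n (p - 2) := by
  rw [show n + 2 = (n + 1) + 1 by ring, Cz_pascal (n + 1) p, Cz_pascal n p,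
    Cz_pascal n (p - 1)]
  ring_nf

def Bz (n : ℕ) (j : ℤ) : ℤ := Cz (2 * n) ((n : ℤ) - j) - Cz (2 * n) ((n : ℤ) - j - 1)

lemma Bz_zero_of_lt {n : ℕ} {j : ℤ} (h : (n : ℤ) < j) : Bz n j = 0 := by
  unfold Bz
  rw [Cz_neg (by omega), Cz_neg (by omega)]; ring

lemma Bz_succ (n : ℕ) (j : ℤ) :
    Bz (n + 1) j = Bz n (j - 1) + 2 * Bz n j + Bz n (j + 1) := by
  unfold Bz
  push_cast
  rw [show 2 * (n + 1) = 2 * n + 2 by ring, Cz_pascal2 (2 * n) ((n : ℤ) + 1 - j),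
    Cz_pascal2 (2 * n) ((n : ℤ) + 1 - j - 1)]
  ring_nf

lemma Bz_neg_one (n : ℕ) : Bz n (-1) = -Bz n 0 := by
  have key : Cz (2 * n) ((n : ℤ) + 1) = Cz (2 * n) ((n : ℤ) - 1) := by
    rcases n with _ | m
    · rw [Cz_gt (by norm_num), Cz_neg (by norm_num)]
    · unfold Cz
      rw [if_pos (by omega), if_pos (by omega)]
      have h1 : (((m + 1 : ℕ) : ℤ) + 1).toNat = m + 2 := by omega
      have h2 : (((m + 1 : ℕ) : ℤ) - 1).toNat = m := by omega
      rw [h1, h2]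
      have hs := Nat.choose_symm (n := 2 * (m + 1)) (k := m + 2) (by omega)
      have hd : 2 * (m + 1) - (m + 2) = m := by omega
      rw [hd] at hs
      rw [hs]
  unfold Bz
  ring_nf
  ring_nf at key
  linarith [key]

def Sz (i : ℕ) (j : ℤ) : ℤ := ∑ l ∈ Finset.range (i + 1), Bz (i - l) j * Cz (2 * l) l

lemma Sz_neg_one (i : ℕ) : Sz i (-1) = -Sz i 0 := by
  unfold Sz
  rw [← Finset.sum_neg_distrib]
  exact Finset.sum_congr rfl fun l _ => by rw [Bz_neg_one]; ring

lemma Sz_succ (i : ℕ) (j : ℤ) :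
    Sz (i + 1) j = Sz i (j - 1) + 2 * Sz i j + Sz i (j + 1)
      + Bz 0 j * Cz (2 * (i + 1)) ((i : ℤ) + 1) := by
  unfold Sz
  rw [Finset.sum_range_succ]
  have hlast : i + 1 - (i + 1) = 0 := by omega
  rw [hlast]
  have hstep : ∀ l ∈ Finset.range (i + 1),
      Bz (i + 1 - l) j * Cz (2 * l) l
        = Bz (i - l) (j - 1) * Cz (2 * l) l + 2 * (Bz (i - l) j * Cz (2 * l) l)
          + Bz (i - l) (j + 1) * Cz (2 * l) l := by
    intro l hl
    have : i + 1 - l = (i - l) + 1 := by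
      have := Finset.mem_range.1 hl; omega
    rw [this, Bz_succ]; ring
  rw [Finset.sum_congr rfl hstep]
  rw [Finset.sum_add_distrib, Finset.sum_add_distrib, ← Finset.mul_sum]
  push_cast
  ring

lemma Sz_eq (i : ℕ) : ∀ j : ℕ, Sz i (j : ℤ) = Cz (2 * i + 1) ((i : ℤ) - j) := by
  induction i with
  | zero =>
    intro j
    unfold Sz Bz
    rw [Finset.sum_range_one]
    rcases j with _ | j
    · norm_num [Cz]
    · push_cast
      rw [Cz_neg (show (0:ℤ) - ((j:ℤ) + 1) < 0 by omega),
        Cz_neg (show (0:ℤ) - ((j:ℤ) + 1) - 1 < 0 by omega),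
        Cz_neg (show (0:ℤ) - ((j:ℤ) + 1) < 0 by omega)]
      ring
  | succ i ih =>
    intro j
    rcases j with _ | j
    · -- j = 0
      have i0 := ih 0
      have i1 := ih 1
      have hp1 : Cz (2 * (i + 1) + 1) ((i : ℤ) + 1)
          = Cz (2 * (i + 1)) ((i : ℤ) + 1) + Cz (2 * (i + 1)) ((i : ℤ)) := by
        rw [Cz_pascal (2 * (i + 1)) ((i : ℤ) + 1)]; ring_nf
      have hp2 : Cz (2 * (i + 1)) ((i : ℤ))
          = Cz (2 * i + 1) ((i : ℤ)) + Cz (2 * i + 1) ((i : ℤ) - 1) := by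
        rw [show 2 * (i + 1) = (2 * i + 1) + 1 by ring, Cz_pascal (2 * i + 1) ((i : ℤ))]
      have hB0 : Bz 0 0 = 1 := by simp [Bz, Cz]
      have hS := Sz_succ i 0
      rw [show (0 : ℤ) - 1 = -1 by ring, Sz_neg_one, hB0] at hS
      push_cast
      rw [hS]
      push_cast at i0 i1 ⊢
      ring_nf at i0 i1 hp1 hp2 ⊢
      linarith [i0, i1, hp1, hp2]
    · -- j = j' + 1
      have i0 := ih j
      have i1 := ih (j + 1)
      have i2 := ih (j + 2)
      have hS := Sz_succ i ((j : ℤ) + 1)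
      have hB0 : Bz 0 ((j : ℤ) + 1) = 0 := Bz_zero_of_lt (by push_cast; omega)
      rw [hB0, show (j : ℤ) + 1 - 1 = (j : ℤ) by ring] at hS
      have hp1 : Cz (2 * (i + 1) + 1) ((i : ℤ) - j)
          = Cz (2 * i + 1) ((i : ℤ) - j) + 2 * Cz (2 * i + 1) ((i : ℤ) - j - 1)
            + Cz (2 * i + 1) ((i : ℤ) - j - 2) := by
        rw [show 2 * (i + 1) + 1 = (2 * i + 1) + 2 by ring,
          Cz_pascal2 (2 * i + 1) ((i : ℤ) - j)]
        try ring_nf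
      push_cast
      rw [hS]
      push_cast at i0 i1 i2
      ring_nf at i0 i1 i2 hp1 ⊢
      linarith [i0, i1, i2, hp1]

lemma key_sum {A : Type*} [CommRing A] (i j : ℕ) :
    ∑ l ∈ Finset.range (i + 1),
        ((Bz (i - l) (j : ℤ) : ℤ) : A) * ((Cz (2 * l) (l : ℤ) : ℤ) : A)
      = ((Cz (2 * i + 1) ((i : ℤ) - j) : ℤ) : A) := by
  have h : (∑ l ∈ Finset.range (i + 1), Bz (i - l) (j : ℤ) * Cz (2 * l) (l : ℤ))
      = Cz (2 * i + 1) ((i : ℤ) - j) := Sz_eq i j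
  calc ∑ l ∈ Finset.range (i + 1),
        ((Bz (i - l) (j : ℤ) : ℤ) : A) * ((Cz (2 * l) (l : ℤ) : ℤ) : A)
      = ((∑ l ∈ Finset.range (i + 1), Bz (i - l) (j : ℤ) * Cz (2 * l) (l : ℤ) : ℤ) : A) := by
        push_cast; ring
    _ = ((Cz (2 * i + 1) ((i : ℤ) - j) : ℤ) : A) := by rw [h]

lemma gammaVal_eq {A : Type*} [CommRing A] (r : A) (g : ℕ → A) (m n : ℕ) :
    gammaVal r g m n = ((Bz n 0 : ℤ) : A) * r ^ n -
      ∑ k ∈ Finset.Icc 2 m, g k * r ^ (n + k) *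
        ∑ j ∈ Finset.Icc 1 (k - 1),
          ((Bz n (j : ℤ) : ℤ) : A) * ((Cz (2 * k - 1) ((k : ℤ) + j) : ℤ) : A) := by
  have h0 : ((Cz (2 * n) (n : ℤ) - Cz (2 * n) ((n : ℤ) - 1) : ℤ) : A) = ((Bz n 0 : ℤ) : A) := by
    unfold Bz; norm_num
  have h1 : ∀ k : ℕ, (∑ j ∈ Finset.Icc 1 (min n (k - 1)),
        ((Cz (2 * n) ((n : ℤ) - j) - Cz (2 * n) ((n : ℤ) - j - 1) : ℤ) : A) *
          ((Cz (2 * k - 1) ((k : ℤ) + j) : ℤ) : A))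
      = ∑ j ∈ Finset.Icc 1 (k - 1),
          ((Bz n (j : ℤ) : ℤ) : A) * ((Cz (2 * k - 1) ((k : ℤ) + j) : ℤ) : A) := by
    intro k
    have e : ∀ j : ℕ, ((Cz (2 * n) ((n : ℤ) - j) - Cz (2 * n) ((n : ℤ) - j - 1) : ℤ) : A)
        = ((Bz n (j : ℤ) : ℤ) : A) := fun j => by unfold Bz; norm_num
    simp only [e]
    apply Finset.sum_subset (Finset.Icc_subset_Icc_right (min_le_right _ _))
    intro j hj hj'
    have hnj : n < j := by
      simp only [Finset.mem_Icc] at hj hj'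
      omega
    rw [Bz_zero_of_lt (show (n : ℤ) < (j : ℤ) by omega)]
    push_cast
    ring
  unfold gammaVal
  rw [h0]
  congr 1
  exact Finset.sum_congr rfl fun k _ => by rw [h1 k]

/-- equivalence of the two formulas for the multi-point functions. -/
theorem stmt_12 {A : Type*} [CommRing A] (r : A) (m : ℕ) (hm : 2 ≤ m) (g : ℕ → A)
    (i : ℕ) :
    ∑ l ∈ Finset.range (i + 1), gammaVal r g m (i - l) * ((Cz (2 * l) (l : ℤ) : ℤ) : A) * r ^ l =
      ((Cz (2 * i + 1) (i : ℤ) : ℤ) : A) * r ^ i -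
        ∑ k ∈ Finset.Icc 2 m, g k * r ^ (i + k) *
          ∑ j ∈ Finset.Icc 1 (min i (k - 1)),
            ((Cz (2 * i + 1) ((i : ℤ) - j) : ℤ) : A) * ((Cz (2 * k - 1) ((k : ℤ) + j) : ℤ) : A) := by
  classical
  have hRHS : ∀ k ∈ Finset.Icc 2 m,
      (∑ j ∈ Finset.Icc 1 (min i (k - 1)),
          ((Cz (2 * i + 1) ((i : ℤ) - j) : ℤ) : A) * ((Cz (2 * k - 1) ((k : ℤ) + j) : ℤ) : A))
        = ∑ j ∈ Finset.Icc 1 (k - 1),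
            ((Cz (2 * i + 1) ((i : ℤ) - j) : ℤ) : A) * ((Cz (2 * k - 1) ((k : ℤ) + j) : ℤ) : A) := by
    intro k hk
    apply Finset.sum_subset (Finset.Icc_subset_Icc_right (min_le_right _ _))
    intro j hj hj'
    have h1 : i < j := by
      simp only [Finset.mem_Icc] at hj hj'
      omega
    rw [Cz_neg (show (i : ℤ) - (j : ℤ) < 0 by omega)]
    push_cast
    ring
  have step1 : ∀ l ∈ Finset.range (i + 1),
      gammaVal r g m (i - l) * ((Cz (2 * l) (l : ℤ) : ℤ) : A) * r ^ l
        = ((Bz (i - l) 0 : ℤ) : A) * ((Cz (2 * l) (l : ℤ) : ℤ) : A) * r ^ i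
          - ∑ k ∈ Finset.Icc 2 m, g k * r ^ (i + k) *
              ∑ j ∈ Finset.Icc 1 (k - 1),
                ((Bz (i - l) (j : ℤ) : ℤ) : A) * ((Cz (2 * k - 1) ((k : ℤ) + j) : ℤ) : A)
                  * ((Cz (2 * l) (l : ℤ) : ℤ) : A) := by
    intro l hl
    have hli : l ≤ i := by
      have := Finset.mem_range.1 hl; omega
    rw [gammaVal_eq]
    rw [sub_mul, sub_mul]
    congr 1
    · rw [mul_assoc, mul_assoc, mul_assoc]
      congr 1
      rw [mul_comm (r ^ (i - l)) _, mul_assoc, ← pow_add]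
      congr 2
      omega
    · rw [Finset.sum_mul, Finset.sum_mul]
      apply Finset.sum_congr rfl
      intro k hk
      have hpow : r ^ (i - l + k) * r ^ l = r ^ (i + k) := by
        rw [← pow_add]
        congr 1
        omega
      calc g k * r ^ (i - l + k) *
              (∑ j ∈ Finset.Icc 1 (k - 1),
                ((Bz (i - l) (j : ℤ) : ℤ) : A) * ((Cz (2 * k - 1) ((k : ℤ) + j) : ℤ) : A)) *
              ((Cz (2 * l) (l : ℤ) : ℤ) : A) * r ^ l
          = g k * (r ^ (i - l + k) * r ^ l) *
              (∑ j ∈ Finset.Icc 1 (k - 1),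
                ((Bz (i - l) (j : ℤ) : ℤ) : A) * ((Cz (2 * k - 1) ((k : ℤ) + j) : ℤ) : A)) *
              ((Cz (2 * l) (l : ℤ) : ℤ) : A) := by ring
        _ = g k * r ^ (i + k) *
              ∑ j ∈ Finset.Icc 1 (k - 1),
                ((Bz (i - l) (j : ℤ) : ℤ) : A) * ((Cz (2 * k - 1) ((k : ℤ) + j) : ℤ) : A)
                  * ((Cz (2 * l) (l : ℤ) : ℤ) : A) := by
            rw [hpow, ← Finset.sum_mul]; ring
  rw [Finset.sum_congr rfl step1, Finset.sum_sub_distrib]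
  have hfirst : ∑ l ∈ Finset.range (i + 1),
      ((Bz (i - l) 0 : ℤ) : A) * ((Cz (2 * l) (l : ℤ) : ℤ) : A) * r ^ i
        = ((Cz (2 * i + 1) (i : ℤ) : ℤ) : A) * r ^ i := by
    rw [← Finset.sum_mul]
    have h0 := key_sum (A := A) i 0
    rw [show ((0 : ℕ) : ℤ) = 0 from rfl, sub_zero] at h0
    rw [h0]
  rw [hfirst]
  congr 1
  rw [Finset.sum_comm]
  apply Finset.sum_congr rfl
  intro k hk
  rw [← Finset.mul_sum, hRHS k hk, Finset.sum_comm]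
  congr 1
  apply Finset.sum_congr rfl
  intro j hj
  have hj2 : ∑ l ∈ Finset.range (i + 1),
      ((Bz (i - l) (j : ℤ) : ℤ) : A) * ((Cz (2 * k - 1) ((k : ℤ) + j) : ℤ) : A)
        * ((Cz (2 * l) (l : ℤ) : ℤ) : A)
      = (∑ l ∈ Finset.range (i + 1),
          ((Bz (i - l) (j : ℤ) : ℤ) : A) * ((Cz (2 * l) (l : ℤ) : ℤ) : A))
        * ((Cz (2 * k - 1) ((k : ℤ) + j) : ℤ) : A) := by
    rw [Finset.sum_mul]
    exact Finset.sum_congr rfl fun l _ => by ring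
  rw [hj2, key_sum]
end

section
/- For every commutative ring A, every family of weights R : ℤ → A, every m ≥ 1, all g_1, …, g_m ∈ A, every integer n ≥ 0 and every natural number j, the following inversion formula expressing V' in terms of the symmetric quantities Γ̃ holds: V'_{n+j,n−j−1} = Σ_{i=0}^{j} (−1)^{i−1} · Π_{n−j,n+j−1}(i) · Γ̃_{2j−2i}(n) + δ_{j,0} · R_n. -/
open Finset

variable {A : Type*} [CommRing A]

lemma Zw_zero (R : ℤ → A) (a b : ℤ) : Zw R a b 0 = if a = b then 1 else 0 := by
  unfold Zw
  rw [Fintype.sum_eq_single (fun i => Fin.elim0 i)]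
  · simp [List.ofFn_zero, walkEnd, walkWeight]
  · intro x hx; exact absurd (funext fun i => Fin.elim0 i) hx

lemma Zw_succ (R : ℤ → A) (a b : ℤ) (k : ℕ) :
    Zw R a b (k + 1) = Zw R (a + 1) b k + R a * Zw R (a - 1) b k := by
  unfold Zw
  rw [← (Fin.consEquiv (fun _ : Fin (k+1) => Bool)).sum_comp, Fintype.sum_prod_type,
    Fintype.sum_bool]
  have hofn : ∀ (x : Bool) (t : Fin k → Bool),
      List.ofFn (Fin.consEquiv (fun _ : Fin (k+1) => Bool) (x, t)) = x :: List.ofFn t := by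
    intro x t
    rw [List.ofFn_succ]
    simp [Fin.consEquiv]
  simp only [hofn]
  rw [Finset.mul_sum]
  simp only [walkEnd, walkWeight, mul_ite, mul_zero]
  rfl

lemma Zw_vanish (R : ℤ → A) : ∀ (k : ℕ) (a b : ℤ),
    ((k : ℤ) < (b - a).natAbs ∨ ¬ (2 : ℤ) ∣ (b - a - k)) → Zw R a b k = 0 := by
  intro k
  induction k with
  | zero =>
    intro a b h
    rw [Zw_zero, if_neg]
    intro rfl; simp at h
  | succ k ih =>
    intro a b h
    rw [Zw_succ, ih (a+1) b (by omega), ih (a-1) b (by omega)]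
    ring

lemma Pdim_zero (R : ℤ → A) (a b : ℤ) : Pdim R a b 0 = 1 := by
  simp [Pdim]

lemma Pdim_empty (R : ℤ → A) {a b : ℤ} (h : b ≤ a) (i : ℕ) : Pdim R a b (i + 1) = 0 := by
  unfold Pdim
  rw [Finset.Icc_eq_empty (by omega), Finset.powersetCard_eq_empty.mpr (by simp)]
  simp

lemma Pdim_top (R : ℤ → A) {a b : ℤ} (h : a < b) (i : ℕ) :
    Pdim R a b (i + 1) = Pdim R a (b - 1) (i + 1) + R b * Pdim R a (b - 2) i := by
  have hI : Finset.Icc (a + 1) b = insert b (Finset.Icc (a + 1) (b - 1)) := by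
    ext x; simp [Finset.mem_Icc]; omega
  have hb : b ∉ Finset.Icc (a + 1) (b - 1) := by simp [Finset.mem_Icc]
  unfold Pdim
  rw [hI, Finset.powersetCard_succ_insert hb, Finset.sum_union, Finset.sum_image]
  · congr 1
    -- second sum
    have key : ∀ S ∈ Finset.powersetCard i (Finset.Icc (a + 1) (b - 1)),
        (if ∀ x ∈ insert b S, x + 1 ∉ insert b S then ∏ x ∈ insert b S, R x else 0)
        = if (∀ x ∈ S, x + 1 ∉ S) ∧ b - 1 ∉ S then R b * ∏ x ∈ S, R x else 0 := by
      intro S hS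
      rw [Finset.mem_powersetCard] at hS
      have hbS : b ∉ S := fun hb' => hb (hS.1 hb')
      have hsub : ∀ x ∈ S, a + 1 ≤ x ∧ x ≤ b - 1 := by
        intro x hx; exact Finset.mem_Icc.mp (hS.1 hx)
      rw [Finset.prod_insert hbS]
      congr 1
      simp only [Finset.mem_insert, eq_iff_iff]
      constructor
      · intro hcond
        refine ⟨fun x hx => fun hx1 => ?_, fun hbm => ?_⟩
        · rcases hcond x (Or.inr hx) with hc
          exact hc (Or.inr hx1)
        · rcases hcond (b-1) (Or.inr hbm) with hc
          exact hc (Or.inl (by ring))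
      · rintro ⟨h1, h2⟩ x hx
        rcases hx with rfl | hx
        · rintro (h3 | h3)
          · omega
          · have := (hsub _ h3).2; omega
        · rintro (h3 | h3)
          · exact h2 (by rw [← h3]; simpa using hx)
          · exact h1 x hx h3
    rw [Finset.sum_congr rfl key]
    rw [Finset.mul_sum]
    rw [← Finset.sum_subset (Finset.powersetCard_mono (Finset.Icc_subset_Icc_right (show b-2 ≤ b-1 by omega)) )]
    · apply Finset.sum_congr rfl
      intro S hS
      rw [Finset.mem_powersetCard] at hS
      have : b - 1 ∉ S := fun hm => by
        have := Finset.mem_Icc.mp (hS.1 hm); omega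
      rw [mul_ite, mul_zero]
      congr 1
      simp [this]
    · intro S hS hS'
      rw [Finset.mem_powersetCard] at hS hS'
      have : b - 1 ∈ S := by
        by_contra hbm
        exact hS' ⟨fun x hx => by
          have := Finset.mem_Icc.mp (hS.1 hx)
          refine Finset.mem_Icc.mpr ⟨this.1, ?_⟩
          rcases lt_or_eq_of_le this.2 with h' | h'
          · omega
          · exact absurd (h' ▸ hx) hbm, hS.2⟩
      rw [if_neg]; rintro ⟨-, h2⟩; exact h2 this
  · intro S hS T hT hST
    rw [Finset.mem_coe, Finset.mem_powersetCard] at hS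
    rw [Finset.mem_coe, Finset.mem_powersetCard] at hT
    have hbS : b ∉ S := fun h' => hb (hS.1 h')
    have hbT : b ∉ T := fun h' => hb (hT.1 h')
    have := congrArg (Finset.erase · b) hST
    simpa [Finset.erase_insert hbS, Finset.erase_insert hbT] using this
  · rw [Finset.disjoint_left]
    intro S hS hS'
    rw [Finset.mem_powersetCard] at hS
    rw [Finset.mem_image] at hS'
    obtain ⟨T, hT, rfl⟩ := hS'
    exact hb (hS.1 (Finset.mem_insert_self b T))

lemma Pdim_bot (R : ℤ → A) {a b : ℤ} (h : a < b) (i : ℕ) :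
    Pdim R a b (i + 1) = Pdim R (a + 1) b (i + 1) + R (a + 1) * Pdim R (a + 2) b i := by
  have hI : Finset.Icc (a + 1) b = insert (a + 1) (Finset.Icc (a + 2) b) := by
    ext x; simp [Finset.mem_Icc]; omega
  have hb : a + 1 ∉ Finset.Icc (a + 2) b := by simp [Finset.mem_Icc]
  unfold Pdim
  rw [hI, Finset.powersetCard_succ_insert hb, Finset.sum_union, Finset.sum_image,
    show a+1+1 = a+2 from by ring, show a+2+1 = a+3 from by ring]
  · congr 1
    have key : ∀ S ∈ Finset.powersetCard i (Finset.Icc (a + 2) b),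
        (if ∀ x ∈ insert (a+1) S, x + 1 ∉ insert (a+1) S then ∏ x ∈ insert (a+1) S, R x else 0)
        = if (∀ x ∈ S, x + 1 ∉ S) ∧ a + 2 ∉ S then R (a+1) * ∏ x ∈ S, R x else 0 := by
      intro S hS
      rw [Finset.mem_powersetCard] at hS
      have hbS : a + 1 ∉ S := fun hb' => hb (hS.1 hb')
      have hsub : ∀ x ∈ S, a + 2 ≤ x ∧ x ≤ b := by
        intro x hx; exact Finset.mem_Icc.mp (hS.1 hx)
      rw [Finset.prod_insert hbS]
      congr 1
      simp only [Finset.mem_insert, eq_iff_iff]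
      constructor
      · intro hcond
        refine ⟨fun x hx hx1 => (hcond x (Or.inr hx)) (Or.inr hx1), fun hbm => ?_⟩
        exact (hcond (a+1) (Or.inl rfl)) (Or.inr (by rwa [show a+1+1 = a+2 from by ring]))
      · rintro ⟨h1, h2⟩ x hx
        rcases hx with rfl | hx
        · rintro (h3 | h3)
          · omega
          · exact h2 (by rwa [show a+1+1 = a+2 from by ring] at h3)
        · rintro (h3 | h3)
          · have := (hsub _ hx).1; omega
          · exact h1 x hx h3
    rw [Finset.sum_congr rfl key, Finset.mul_sum]
    rw [← Finset.sum_subset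
      (Finset.powersetCard_mono (Finset.Icc_subset_Icc_left (show a+2 ≤ a+3 by omega)))]
    · apply Finset.sum_congr rfl
      intro S hS
      rw [Finset.mem_powersetCard] at hS
      have : a + 2 ∉ S := fun hm => by
        have := Finset.mem_Icc.mp (hS.1 hm); omega
      rw [mul_ite, mul_zero]
      congr 1
      simp [this]
    · intro S hS hS'
      rw [Finset.mem_powersetCard] at hS hS'
      have : a + 2 ∈ S := by
        by_contra hbm
        exact hS' ⟨fun x hx => by
          have hx2 := Finset.mem_Icc.mp (hS.1 hx)
          refine Finset.mem_Icc.mpr ⟨?_, hx2.2⟩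
          rcases lt_or_eq_of_le hx2.1 with h' | h'
          · omega
          · exact absurd (h' ▸ hx) hbm, hS.2⟩
      rw [if_neg]; rintro ⟨-, h2⟩; exact h2 this
  · intro S hS T hT hST
    rw [Finset.mem_coe, Finset.mem_powersetCard] at hS
    rw [Finset.mem_coe, Finset.mem_powersetCard] at hT
    have hbS : a + 1 ∉ S := fun h' => hb (hS.1 h')
    have hbT : a + 1 ∉ T := fun h' => hb (hT.1 h')
    have := congrArg (Finset.erase · (a+1)) hST
    simpa [Finset.erase_insert hbS, Finset.erase_insert hbT] using this
  · rw [Finset.disjoint_left]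
    intro S hS hS'
    rw [Finset.mem_powersetCard] at hS
    rw [Finset.mem_image] at hS'
    obtain ⟨T, hT, rfl⟩ := hS'
    exact hb (hS.1 (Finset.mem_insert_self (a+1) T))

lemma Pdim_big (R : ℤ → A) {a b : ℤ} {i : ℕ} (hi : 1 ≤ i) (h : b - a + 1 < 2 * i) :
    Pdim R a b i = 0 := by
  unfold Pdim
  apply Finset.sum_eq_zero
  intro S hS
  rw [Finset.mem_powersetCard] at hS
  rw [if_neg]
  intro hC
  have hdisj : Disjoint S (S.image (· + 1)) := by
    rw [Finset.disjoint_left]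
    intro x hx hx'
    rw [Finset.mem_image] at hx'
    obtain ⟨y, hy, rfl⟩ := hx'
    exact hC y hy hx
  have hcard : (S ∪ S.image (· + 1)).card = 2 * i := by
    rw [Finset.card_union_of_disjoint hdisj, Finset.card_image_of_injective _
      (fun x y h => by omega)]
    omega
  have hsub : S ∪ S.image (· + 1) ⊆ Finset.Icc (a + 1) (b + 1) := by
    intro x hx
    rw [Finset.mem_union] at hx
    rcases hx with hx | hx
    · have := Finset.mem_Icc.mp (hS.1 hx); exact Finset.mem_Icc.mpr ⟨this.1, by omega⟩
    · rw [Finset.mem_image] at hx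
      obtain ⟨y, hy, rfl⟩ := hx
      have := Finset.mem_Icc.mp (hS.1 hy); exact Finset.mem_Icc.mpr ⟨by omega, by omega⟩
  have := Finset.card_le_card hsub
  rw [hcard, Int.card_Icc] at this
  omega

lemma Pdim_full (R : ℤ → A) (a : ℤ) (t : ℕ) :
    Pdim R a (a + 2 * t - 1) t = ∏ s ∈ Finset.range t, R (a + 2 * s + 1) := by
  induction t with
  | zero => simpa using Pdim_zero R a (a - 1)
  | succ t ih =>
    have h1 : a < a + 2 * (t+1 : ℕ) - 1 := by push_cast; omega
    rw [Pdim_top R h1 t]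
    have e2 : a + 2 * (t+1 : ℕ) - 1 - 2 = a + 2 * t - 1 := by push_cast; ring
    rw [e2, ih, Finset.prod_range_succ]
    have hz : Pdim R a (a + 2 * (t+1:ℕ) - 1 - 1) (t + 1) = 0 := by
      apply Pdim_big R (by omega); push_cast; omega
    rw [hz, zero_add]
    have e3 : a + 2 * (t+1:ℕ) - 1 = a + 2 * (t:ℤ) + 1 := by push_cast; ring
    rw [e3, mul_comm]

-- ZE : walk gf with integer length
def ZE (R : ℤ → A) (u v : ℤ) (k : ℤ) : A := if 0 ≤ k then Zw R u v k.toNat else 0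

lemma ZE_neg (R : ℤ → A) {u v k : ℤ} (h : k < 0) : ZE R u v k = 0 := by
  rw [ZE, if_neg (by omega)]

lemma ZE_zero (R : ℤ → A) (u v : ℤ) : ZE R u v 0 = if u = v then 1 else 0 := by
  rw [ZE, if_pos le_rfl]; exact Zw_zero R u v

lemma ZE_rec (R : ℤ → A) {k : ℤ} (u v : ℤ) (hk : k ≠ 0) :
    ZE R u v k = ZE R (u+1) v (k-1) + R u * ZE R (u-1) v (k-1) := by
  rcases lt_or_gt_of_ne hk with h | h
  · rw [ZE_neg R h, ZE_neg R (by omega), ZE_neg R (by omega)]; ring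
  · obtain ⟨t, ht⟩ : ∃ t : ℕ, k = (t : ℤ) + 1 := ⟨(k-1).toNat, by omega⟩
    subst ht
    rw [ZE, if_pos (by omega), ZE, if_pos (by omega), ZE, if_pos (by omega)]
    have h1 : ((t:ℤ) + 1).toNat = t + 1 := by omega
    have h2 : ((t:ℤ) + 1 - 1).toNat = t := by omega
    rw [h1, h2, Zw_succ]

lemma ZE_vanish (R : ℤ → A) {u v k : ℤ}
    (h : k < (v - u).natAbs ∨ ¬ (2:ℤ) ∣ (v - u - k)) : ZE R u v k = 0 := by
  rcases lt_or_ge k 0 with hk | hk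
  · exact ZE_neg R hk
  · rw [ZE, if_pos hk]
    apply Zw_vanish
    rcases h with h | h
    · left; omega
    · right; intro hc; exact h (by omega)

-- PsumN
noncomputable def PsumN (R : ℤ → A) (a c e b : ℤ) (D : ℕ) : A :=
  ∑ p ∈ Finset.range (D+1), Pdim R a c p * Pdim R e b (D-p)

lemma PsumN_zero (R : ℤ → A) (a c e b : ℤ) : PsumN R a c e b 0 = 1 := by
  simp [PsumN, Pdim_zero]

lemma PsumN_top (R : ℤ → A) {a c : ℤ} (e b : ℤ) (h : a < c) (D : ℕ) :
    PsumN R a c e b (D+1) =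
      PsumN R a (c-1) e b (D+1) + R c * PsumN R a (c-2) e b D := by
  unfold PsumN
  rw [Finset.sum_range_succ' (fun p => Pdim R a c p * Pdim R e b (D+1-p)) (D+1),
    Finset.sum_range_succ' (fun p => Pdim R a (c-1) p * Pdim R e b (D+1-p)) (D+1)]
  simp only [Nat.add_sub_add_right, Nat.sub_zero, Pdim_zero]
  have step : ∀ p ∈ Finset.range (D+1), Pdim R a c (p+1) * Pdim R e b (D-p) =
      Pdim R a (c-1) (p+1) * Pdim R e b (D-p) + R c * (Pdim R a (c-2) p * Pdim R e b (D-p)) := by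
    intro p _; rw [Pdim_top R h]; ring
  rw [Finset.sum_congr rfl step, Finset.sum_add_distrib, ← Finset.mul_sum]
  ring

lemma PsumN_bot (R : ℤ → A) (a c : ℤ) {e b : ℤ} (h : e < b) (D : ℕ) :
    PsumN R a c e b (D+1) =
      PsumN R a c (e+1) b (D+1) + R (e+1) * PsumN R a c (e+2) b D := by
  unfold PsumN
  rw [Finset.sum_range_succ (fun p => Pdim R a c p * Pdim R e b (D+1-p)) (D+1),
    Finset.sum_range_succ (fun p => Pdim R a c p * Pdim R (e+1) b (D+1-p)) (D+1)]
  simp only [Nat.sub_self, Pdim_zero]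
  have step : ∀ p ∈ Finset.range (D+1), Pdim R a c p * Pdim R e b (D+1-p) =
      Pdim R a c p * Pdim R (e+1) b (D+1-p)
        + R (e+1) * (Pdim R a c p * Pdim R (e+2) b (D-p)) := by
    intro p hp
    rw [Finset.mem_range] at hp
    have : D + 1 - p = (D - p) + 1 := by omega
    rw [this, Pdim_bot R h]; ring
  rw [Finset.sum_congr rfl step, Finset.sum_add_distrib, ← Finset.mul_sum]
  ring

lemma PsumN_topb (R : ℤ → A) (a c : ℤ) {e b : ℤ} (h : e < b) (D : ℕ) :
    PsumN R a c e b (D+1) =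
      PsumN R a c e (b-1) (D+1) + R b * PsumN R a c e (b-2) D := by
  unfold PsumN
  rw [Finset.sum_range_succ (fun p => Pdim R a c p * Pdim R e b (D+1-p)) (D+1),
    Finset.sum_range_succ (fun p => Pdim R a c p * Pdim R e (b-1) (D+1-p)) (D+1)]
  simp only [Nat.sub_self, Pdim_zero]
  have step : ∀ p ∈ Finset.range (D+1), Pdim R a c p * Pdim R e b (D+1-p) =
      Pdim R a c p * Pdim R e (b-1) (D+1-p)
        + R b * (Pdim R a c p * Pdim R e (b-2) (D-p)) := by
    intro p hp
    rw [Finset.mem_range] at hp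
    have : D + 1 - p = (D - p) + 1 := by omega
    rw [this, Pdim_top R h]; ring
  rw [Finset.sum_congr rfl step, Finset.sum_add_distrib, ← Finset.mul_sum]
  ring

lemma PsumN_degen (R : ℤ → A) (a c : ℤ) {e b : ℤ} (h : b ≤ e) (D : ℕ) :
    PsumN R a c e b D = Pdim R a c D := by
  unfold PsumN
  rw [Finset.sum_eq_single_of_mem D (Finset.self_mem_range_succ D)]
  · rw [Nat.sub_self, Pdim_zero, mul_one]
  · intro p hp hne
    rw [Finset.mem_range] at hp
    obtain ⟨k, hk⟩ : ∃ k : ℕ, D - p = k + 1 := ⟨D - p - 1, by omega⟩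
    rw [hk, Pdim_empty R h, mul_zero]

-- integer-indexed wrappers
noncomputable def PdimZ (R : ℤ → A) (a b : ℤ) (i : ℤ) : A := if 0 ≤ i then Pdim R a b i.toNat else 0

noncomputable def PsumZ (R : ℤ → A) (a c e b : ℤ) (d : ℤ) : A := if 0 ≤ d then PsumN R a c e b d.toNat else 0

lemma PdimZ_neg (R : ℤ → A) {a b i : ℤ} (h : i < 0) : PdimZ R a b i = 0 := by
  rw [PdimZ, if_neg (by omega)]

lemma PdimZ_zero (R : ℤ → A) (a b : ℤ) : PdimZ R a b 0 = 1 := by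
  rw [PdimZ, if_pos le_rfl]; exact Pdim_zero R a b

lemma PdimZ_of_nat (R : ℤ → A) (a b : ℤ) (i : ℕ) : PdimZ R a b (i : ℤ) = Pdim R a b i := by
  rw [PdimZ, if_pos (by omega), Int.toNat_natCast]

lemma PsumZ_neg (R : ℤ → A) {a c e b d : ℤ} (h : d < 0) : PsumZ R a c e b d = 0 := by
  rw [PsumZ, if_neg (by omega)]

lemma PsumZ_zero (R : ℤ → A) (a c e b : ℤ) : PsumZ R a c e b 0 = 1 := by
  rw [PsumZ, if_pos le_rfl]; exact PsumN_zero R a c e b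

lemma PsumZ_of_nat (R : ℤ → A) (a c e b : ℤ) (d : ℕ) :
    PsumZ R a c e b (d : ℤ) = PsumN R a c e b d := by
  rw [PsumZ, if_pos (by omega), Int.toNat_natCast]

lemma PdimZ_top (R : ℤ → A) {a b : ℤ} (h : a < b) (i : ℤ) :
    PdimZ R a b i = PdimZ R a (b-1) i + R b * PdimZ R a (b-2) (i-1) := by
  rcases lt_or_ge i 0 with hi | hi
  · rw [PdimZ_neg R hi, PdimZ_neg R hi, PdimZ_neg R (show i - 1 < 0 by omega)]; ring
  rcases eq_or_lt_of_le hi with hi0 | hi1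
  · rw [← hi0, PdimZ_zero, PdimZ_zero, PdimZ_neg R (by omega)]; ring
  · obtain ⟨k, rfl⟩ : ∃ k : ℕ, i = (k : ℤ) + 1 := ⟨(i-1).toNat, by omega⟩
    rw [show (k:ℤ) + 1 - 1 = (k:ℤ) from by ring, PdimZ_of_nat,
      show ((k:ℤ)+1) = ((k+1 : ℕ) : ℤ) from by push_cast; ring, PdimZ_of_nat, PdimZ_of_nat]
    exact Pdim_top R h k

lemma PdimZ_bot (R : ℤ → A) {a b : ℤ} (h : a < b) (i : ℤ) :
    PdimZ R a b i = PdimZ R (a+1) b i + R (a+1) * PdimZ R (a+2) b (i-1) := by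
  rcases lt_or_ge i 0 with hi | hi
  · rw [PdimZ_neg R hi, PdimZ_neg R hi, PdimZ_neg R (show i - 1 < 0 by omega)]; ring
  rcases eq_or_lt_of_le hi with hi0 | hi1
  · rw [← hi0, PdimZ_zero, PdimZ_zero, PdimZ_neg R (by omega)]; ring
  · obtain ⟨k, rfl⟩ : ∃ k : ℕ, i = (k : ℤ) + 1 := ⟨(i-1).toNat, by omega⟩
    rw [show (k:ℤ) + 1 - 1 = (k:ℤ) from by ring, PdimZ_of_nat,
      show ((k:ℤ)+1) = ((k+1 : ℕ) : ℤ) from by push_cast; ring, PdimZ_of_nat, PdimZ_of_nat]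
    exact Pdim_bot R h k

lemma PsumZ_top (R : ℤ → A) {a c : ℤ} (e b : ℤ) (h : a < c) (d : ℤ) :
    PsumZ R a c e b d = PsumZ R a (c-1) e b d + R c * PsumZ R a (c-2) e b (d-1) := by
  rcases lt_or_ge d 0 with hd | hd
  · rw [PsumZ_neg R hd, PsumZ_neg R hd, PsumZ_neg R (show d - 1 < 0 by omega)]; ring
  rcases eq_or_lt_of_le hd with hd0 | hd1
  · rw [← hd0, PsumZ_zero, PsumZ_zero, PsumZ_neg R (by omega)]; ring
  · obtain ⟨k, rfl⟩ : ∃ k : ℕ, d = (k : ℤ) + 1 := ⟨(d-1).toNat, by omega⟩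
    rw [show (k:ℤ) + 1 - 1 = (k:ℤ) from by ring, PsumZ_of_nat,
      show ((k:ℤ)+1) = ((k+1 : ℕ) : ℤ) from by push_cast; ring, PsumZ_of_nat, PsumZ_of_nat]
    exact PsumN_top R e b h k

lemma PsumZ_bot (R : ℤ → A) (a c : ℤ) {e b : ℤ} (h : e < b) (d : ℤ) :
    PsumZ R a c e b d = PsumZ R a c (e+1) b d + R (e+1) * PsumZ R a c (e+2) b (d-1) := by
  rcases lt_or_ge d 0 with hd | hd
  · rw [PsumZ_neg R hd, PsumZ_neg R hd, PsumZ_neg R (show d - 1 < 0 by omega)]; ring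
  rcases eq_or_lt_of_le hd with hd0 | hd1
  · rw [← hd0, PsumZ_zero, PsumZ_zero, PsumZ_neg R (by omega)]; ring
  · obtain ⟨k, rfl⟩ : ∃ k : ℕ, d = (k : ℤ) + 1 := ⟨(d-1).toNat, by omega⟩
    rw [show (k:ℤ) + 1 - 1 = (k:ℤ) from by ring, PsumZ_of_nat,
      show ((k:ℤ)+1) = ((k+1 : ℕ) : ℤ) from by push_cast; ring, PsumZ_of_nat, PsumZ_of_nat]
    exact PsumN_bot R a c h k

lemma PsumZ_topb (R : ℤ → A) (a c : ℤ) {e b : ℤ} (h : e < b) (d : ℤ) :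
    PsumZ R a c e b d = PsumZ R a c e (b-1) d + R b * PsumZ R a c e (b-2) (d-1) := by
  rcases lt_or_ge d 0 with hd | hd
  · rw [PsumZ_neg R hd, PsumZ_neg R hd, PsumZ_neg R (show d - 1 < 0 by omega)]; ring
  rcases eq_or_lt_of_le hd with hd0 | hd1
  · rw [← hd0, PsumZ_zero, PsumZ_zero, PsumZ_neg R (by omega)]; ring
  · obtain ⟨k, rfl⟩ : ∃ k : ℕ, d = (k : ℤ) + 1 := ⟨(d-1).toNat, by omega⟩
    rw [show (k:ℤ) + 1 - 1 = (k:ℤ) from by ring, PsumZ_of_nat,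
      show ((k:ℤ)+1) = ((k+1 : ℕ) : ℤ) from by push_cast; ring, PsumZ_of_nat, PsumZ_of_nat]
    exact PsumN_topb R a c h k

lemma PsumZ_degen (R : ℤ → A) (a c : ℤ) {e b : ℤ} (h : b ≤ e) (d : ℤ) :
    PsumZ R a c e b d = PdimZ R a c d := by
  rcases lt_or_ge d 0 with hd | hd
  · rw [PsumZ_neg R hd, PdimZ_neg R hd]
  · rw [PsumZ, if_pos hd, PdimZ, if_pos hd]; exact PsumN_degen R a c h d.toNat

-- key dimer splitting identity E2
lemma E2 (R : ℤ → A) {a u b : ℤ} (ha : a < u) (hb : u < b) (d : ℤ) :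
    PdimZ R a b d = PsumZ R a (u-1) (u+1) b d + R (u+1) * PsumZ R a (u-1) (u+2) b (d-1)
      + R u * PsumZ R a (u-2) (u+1) b (d-1) := by
  have base1 : ∀ d : ℤ,
      PdimZ R a (u+1) d = PsumZ R a (u-1) (u+1) (u+1) d
        + R (u+1) * PsumZ R a (u-1) (u+2) (u+1) (d-1)
        + R u * PsumZ R a (u-2) (u+1) (u+1) (d-1) := by
    intro d
    rw [PsumZ_degen R a (u-1) (le_refl (u+1)) d, PsumZ_degen R a (u-1) (by omega) (d-1),
      PsumZ_degen R a (u-2) (le_refl (u+1)) (d-1),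
      PdimZ_top R (show a < u+1 by omega) d,
      show u + 1 - 1 = u from by ring, show u + 1 - 2 = u - 1 from by ring,
      PdimZ_top R ha d]
    ring
  have base2 : ∀ d : ℤ,
      PdimZ R a (u+2) d = PsumZ R a (u-1) (u+1) (u+2) d
        + R (u+1) * PsumZ R a (u-1) (u+2) (u+2) (d-1)
        + R u * PsumZ R a (u-2) (u+1) (u+2) (d-1) := by
    intro d
    have e1 : ∀ (c' : ℤ) (d' : ℤ), PsumZ R a c' (u+1) (u+2) d'
        = PdimZ R a c' d' + R (u+2) * PdimZ R a c' (d'-1) := by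
      intro c' d'
      rw [PsumZ_topb R a c' (show u+1 < u+2 by omega) d',
        show u+2-1 = u+1 from by ring, show u+2-2 = u from by ring,
        PsumZ_degen R a c' (le_refl (u+1)) d', PsumZ_degen R a c' (show u ≤ u+1 by omega) (d'-1)]
    rw [e1, e1, PsumZ_degen R a (u-1) (le_refl (u+2)) (d-1),
      PdimZ_top R (show a < u+2 by omega) d,
      show u+2-1 = u+1 from by ring, show u+2-2 = u from by ring,
      PdimZ_top R (show a < u+1 by omega) d,
      show u+1-1 = u from by ring, show u+1-2 = u-1 from by ring,
      PdimZ_top R ha d, PdimZ_top R ha (d-1),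
      show d-1-1 = d-2 from by ring]
    ring
  have main : ∀ b' : ℤ, u + 1 ≤ b' →
      (∀ d : ℤ,
        PdimZ R a b' d = PsumZ R a (u-1) (u+1) b' d + R (u+1) * PsumZ R a (u-1) (u+2) b' (d-1)
          + R u * PsumZ R a (u-2) (u+1) b' (d-1)) ∧
      (∀ d : ℤ,
        PdimZ R a (b'+1) d = PsumZ R a (u-1) (u+1) (b'+1) d
          + R (u+1) * PsumZ R a (u-1) (u+2) (b'+1) (d-1)
          + R u * PsumZ R a (u-2) (u+1) (b'+1) (d-1)) := by
    refine fun b' hb' => Int.le_induction (motive := fun b'' _ =>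
      (∀ d : ℤ,
        PdimZ R a b'' d = PsumZ R a (u-1) (u+1) b'' d + R (u+1) * PsumZ R a (u-1) (u+2) b'' (d-1)
          + R u * PsumZ R a (u-2) (u+1) b'' (d-1)) ∧
      (∀ d : ℤ,
        PdimZ R a (b''+1) d = PsumZ R a (u-1) (u+1) (b''+1) d
          + R (u+1) * PsumZ R a (u-1) (u+2) (b''+1) (d-1)
          + R u * PsumZ R a (u-2) (u+1) (b''+1) (d-1))) ?_ ?_ b' hb'
    · exact ⟨base1, by rw [show u+1+1 = u+2 from by ring]; exact base2⟩
    · intro b' hb' ih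
      refine ⟨ih.2, ?_⟩
      intro d
      rw [PdimZ_top R (show a < b'+1+1 by omega) d,
        show b'+1+1-1 = b'+1 from by ring, show b'+1+1-2 = b' from by ring,
        ih.2 d, ih.1 (d-1),
        PsumZ_topb R a (u-1) (show u+1 < b'+1+1 by omega) d,
        PsumZ_topb R a (u-1) (show u+2 < b'+1+1 by omega) (d-1),
        PsumZ_topb R a (u-2) (show u+1 < b'+1+1 by omega) (d-1)]
      rw [show b'+1+1-1 = b'+1 from by ring, show b'+1+1-2 = b' from by ring,
        show d-1-1 = d-2 from by ring]
      ring
  exact (main b (by omega)).1 d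

-- the walk-side sum and the dimer-side value
noncomputable def ASum (R : ℤ → A) (a b u v : ℤ) (L : ℕ) : A :=
  ∑ i ∈ Finset.range (L+1), (-1:A)^i * Pdim R a b i * ZE R u v ((L:ℤ) - 2*i)

noncomputable def TVal (R : ℤ → A) (a b u v L : ℤ) : A :=
  if u ≤ v then
    (if 2 ∣ (L - (v - u)) then
      (-1:A)^((L - (v-u))/2).toNat * PsumZ R a (u-1) (v+1) b ((L - (v-u))/2) else 0)
  else
    (if 2 ∣ (L - (u - v)) then
      (-1:A)^((L - (u-v))/2).toNat *
        ((∏ h ∈ Finset.Icc (v+1) u, R h) * PsumZ R a (v-1) (u+1) b ((L - (u-v))/2)) else 0)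

lemma TVal_le (R : ℤ → A) (a b : ℤ) {u v L : ℤ} (huv : u ≤ v) {d : ℕ}
    (hL : L = (v - u) + 2*d) :
    TVal R a b u v L = (-1:A)^d * PsumN R a (u-1) (v+1) b d := by
  rw [TVal, if_pos huv, if_pos ⟨d, by omega⟩,
    show (L - (v-u))/2 = (d:ℤ) from by omega, Int.toNat_natCast, PsumZ_of_nat]

lemma TVal_ge (R : ℤ → A) (a b : ℤ) {u v L : ℤ} (hvu : v ≤ u) {d : ℕ}
    (hL : L = (u - v) + 2*d) :
    TVal R a b u v L =
      (-1:A)^d * ((∏ h ∈ Finset.Icc (v+1) u, R h) * PsumN R a (v-1) (u+1) b d) := by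
  rcases eq_or_lt_of_le hvu with rfl | hvu'
  · rw [TVal_le R a b le_rfl hL, Finset.Icc_eq_empty (by omega), Finset.prod_empty, one_mul]
  · rw [TVal, if_neg (by omega), if_pos ⟨d, by omega⟩,
      show (L - (u-v))/2 = (d:ℤ) from by omega, Int.toNat_natCast, PsumZ_of_nat]

lemma TVal_odd (R : ℤ → A) (a b : ℤ) {u v L : ℤ} (h : ¬ 2 ∣ (L - (v - u))) :
    TVal R a b u v L = 0 := by
  rw [TVal]
  rcases le_or_gt u v with h' | h'
  · rw [if_pos h', if_neg h]
  · rw [if_neg (by omega), if_neg (by omega)]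

lemma TVal_lt (R : ℤ → A) (a b : ℤ) {u v L : ℤ} (huv : u ≤ v) (h : L < v - u) :
    TVal R a b u v L = 0 := by
  rw [TVal, if_pos huv]
  by_cases hd : 2 ∣ (L - (v - u))
  · rw [if_pos hd, PsumZ_neg R (by omega), mul_zero]
  · rw [if_neg hd]

lemma TVal_gt (R : ℤ → A) (a b : ℤ) {u v L : ℤ} (hvu : v ≤ u) (h : L < u - v) :
    TVal R a b u v L = 0 := by
  rw [TVal]
  rcases eq_or_lt_of_le hvu with rfl | h'
  · rw [if_pos le_rfl]
    by_cases hd : 2 ∣ (L - (v - v))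
    · rw [if_pos hd, PsumZ_neg R (by omega), mul_zero]
    · rw [if_neg hd]
  · rw [if_neg (by omega)]
    by_cases hd : 2 ∣ (L - (u - v))
    · rw [if_pos hd, PsumZ_neg R (by omega), mul_zero, mul_zero]
    · rw [if_neg hd]

-- recurrence for the walk-side sum
lemma Arec (R : ℤ → A) (a b u v : ℤ) (L : ℕ) :
    ASum R a b u v (L+1) = ASum R a b (u+1) v L + R u * ASum R a b (u-1) v L +
      (if u = v ∧ (L+1) % 2 = 0 then (-1:A)^((L+1)/2) * Pdim R a b ((L+1)/2) else 0) := by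
  have ext1 : ∀ w : ℤ, ASum R a b w v L
      = ∑ i ∈ Finset.range (L+2), (-1:A)^i * Pdim R a b i * ZE R w v ((L:ℤ) - 2*i) := by
    intro w
    rw [ASum, Finset.sum_range_succ _ (L+1), ZE_neg R (by push_cast; omega), mul_zero, add_zero]
  rw [ext1, ext1, ASum]
  have key : ∀ i ∈ Finset.range (L+2),
      (-1:A)^i * Pdim R a b i * ZE R u v (((L+1:ℕ):ℤ) - 2*i)
      = ((-1:A)^i * Pdim R a b i * ZE R (u+1) v ((L:ℤ) - 2*i)
        + R u * ((-1:A)^i * Pdim R a b i * ZE R (u-1) v ((L:ℤ) - 2*i)))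
        + (if 2*i = L+1 then (-1:A)^i * Pdim R a b i * (if u = v then 1 else 0) else 0) := by
    intro i _
    by_cases h2 : 2*i = L+1
    · rw [if_pos h2, show ((L+1:ℕ):ℤ) - 2*i = 0 from by push_cast; omega, ZE_zero,
        ZE_neg R (by push_cast; omega), ZE_neg R (by push_cast; omega)]
      ring
    · rw [if_neg h2, ZE_rec R u v (show ((L+1:ℕ):ℤ) - 2*i ≠ 0 from by push_cast; omega),
        show ((L+1:ℕ):ℤ) - 2*i - 1 = (L:ℤ) - 2*i from by push_cast; ring]
      ring
  rw [Finset.sum_congr rfl key, Finset.sum_add_distrib, Finset.sum_add_distrib,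
    ← Finset.mul_sum]
  congr 1
  by_cases hpar : (L+1) % 2 = 0
  · obtain ⟨c, hc⟩ : ∃ c : ℕ, L + 1 = 2*c := ⟨(L+1)/2, by omega⟩
    have hiff : ∀ i, (2*i = L+1) ↔ (i = c) := by intro i; omega
    calc ∑ i ∈ Finset.range (L+2),
          (if 2*i = L+1 then (-1:A)^i * Pdim R a b i * (if u = v then 1 else 0) else 0)
        = ∑ i ∈ Finset.range (L+2),
          (if i = c then (-1:A)^i * Pdim R a b i * (if u = v then 1 else 0) else 0) := by
          exact Finset.sum_congr rfl fun i _ => if_congr (hiff i) rfl rfl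
      _ = (-1:A)^c * Pdim R a b c * (if u = v then 1 else 0) := by
          rw [Finset.sum_ite_eq' (Finset.range (L+2)) c, if_pos (by simp; omega)]
      _ = _ := by
          have hc2 : (L+1)/2 = c := by omega
          by_cases huv : u = v
          · rw [if_pos huv, if_pos ⟨huv, hpar⟩, hc2, mul_one]
          · rw [if_neg huv, if_neg (by tauto), mul_zero]
  · rw [Finset.sum_eq_zero (fun i _ => if_neg (by omega)), if_neg (by tauto)]

lemma Icc_prod_split (R : ℤ → A) {v u : ℤ} (h : v < u) :
    (∏ h ∈ Finset.Icc (v+1) u, R h) = R u * ∏ h ∈ Finset.Icc (v+1) (u-1), R h := by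
  have hI : Finset.Icc (v+1) u = insert u (Finset.Icc (v+1) (u-1)) := by
    ext x; simp [Finset.mem_Icc]; omega
  rw [hI, Finset.prod_insert (by simp [Finset.mem_Icc])]

lemma Trec (R : ℤ → A) (a b : ℤ) (L : ℕ) (u v : ℤ)
    (h1 : 2*a - 1 ≤ u + v - ((L:ℤ)+1)) (h2 : u + v + ((L:ℤ)+1) ≤ 2*b + 1) :
    TVal R a b u v ((L:ℤ)+1) = TVal R a b (u+1) v (L:ℤ) + R u * TVal R a b (u-1) v (L:ℤ) +
      (if u = v ∧ (L+1) % 2 = 0 then (-1:A)^((L+1)/2) * Pdim R a b ((L+1)/2) else 0) := by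
  by_cases hpar : 2 ∣ ((L:ℤ) + 1 - (v - u))
  · rcases lt_trichotomy u v with huv | rfl | hvu
    · -- u < v
      by_cases hlt : (L:ℤ)+1 < v - u
      · rw [TVal_lt R a b (by omega) hlt, TVal_lt R a b (show u+1 ≤ v by omega) (by omega),
          TVal_lt R a b (show u-1 ≤ v by omega) (by omega), if_neg (by rintro ⟨rfl,-⟩; omega)]
        ring
      · obtain ⟨d, hd⟩ : ∃ d : ℕ, (L:ℤ)+1 = (v-u) + 2*d :=
          ⟨(((L:ℤ)+1-(v-u))/2).toNat, by omega⟩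
        rcases d with - | d'
        · rw [TVal_le R a b (le_of_lt huv) (d := 0) (by omega),
            TVal_le R a b (show u+1 ≤ v by omega) (d := 0) (by omega),
            TVal_lt R a b (show u-1 ≤ v by omega) (by omega),
            if_neg (by rintro ⟨rfl,-⟩; omega)]
          rw [show u+1-1 = u from by ring, PsumN_zero, PsumN_zero]
          ring
        · have hau : a < u := by omega
          rw [TVal_le R a b (le_of_lt huv) (d := d'+1) (by push_cast; omega),
            TVal_le R a b (show u+1 ≤ v by omega) (d := d'+1) (by push_cast; omega),
            TVal_le R a b (show u-1 ≤ v by omega) (d := d') (by push_cast; omega),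
            if_neg (by rintro ⟨rfl,-⟩; omega),
            show u+1-1 = u from by ring, show u-1-1 = u-2 from by ring,
            PsumN_top R (v+1) b hau d']
          ring
    · -- u = v
      obtain ⟨c, hc⟩ : ∃ c : ℕ, (L:ℤ)+1 = 2*((c:ℤ)+1) := by
        have : ∃ c' : ℕ, (L:ℤ)+1 = 2*(c':ℤ) := ⟨(((L:ℤ)+1)/2).toNat, by omega⟩
        obtain ⟨c', hc'⟩ := this
        exact ⟨c'-1, by omega⟩
      have hau : a < u := by omega
      have hub : u < b := by omega
      rw [TVal_le R a b le_rfl (d := c+1) (by push_cast; omega),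
        TVal_ge R a b (show u ≤ u+1 by omega) (d := c) (by push_cast; omega),
        TVal_le R a b (show u-1 ≤ u by omega) (d := c) (by push_cast; omega),
        if_pos ⟨rfl, by omega⟩,
        show (L+1)/2 = c+1 from by omega,
        show u-1-1 = u-2 from by ring, show u+1+1 = u+2 from by ring,
        Finset.Icc_self, Finset.prod_singleton]
      have he2 := E2 R hau hub ((c:ℤ)+1)
      rw [show (c:ℤ)+1-1 = (c:ℤ) from by ring,
        show (c:ℤ)+1 = ((c+1:ℕ):ℤ) from by push_cast; ring,
        PdimZ_of_nat, PsumZ_of_nat, PsumZ_of_nat, PsumZ_of_nat] at he2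
      rw [he2]
      ring
    · -- v < u
      by_cases hlt : (L:ℤ)+1 < u - v
      · rw [TVal_gt R a b (by omega) (by omega), TVal_gt R a b (show v ≤ u+1 by omega) (by omega),
          TVal_gt R a b (show v ≤ u-1 by omega) (by omega), if_neg (by rintro ⟨rfl,-⟩; omega)]
        ring
      · obtain ⟨d, hd⟩ : ∃ d : ℕ, (L:ℤ)+1 = (u-v) + 2*d :=
          ⟨(((L:ℤ)+1-(u-v))/2).toNat, by omega⟩
        rcases d with - | d'
        · rw [TVal_ge R a b (by omega) (d := 0) (by omega),
            TVal_gt R a b (show v ≤ u+1 by omega) (by omega),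
            TVal_ge R a b (show v ≤ u-1 by omega) (d := 0) (by omega),
            if_neg (by rintro ⟨rfl,-⟩; omega),
            show u-1+1 = u from by ring, PsumN_zero, PsumN_zero,
            Icc_prod_split R hvu]
          ring
        · have hub : u < b := by omega
          rw [TVal_ge R a b (by omega) (d := d'+1) (by push_cast; omega),
            TVal_ge R a b (show v ≤ u+1 by omega) (d := d') (by push_cast; omega),
            TVal_ge R a b (show v ≤ u-1 by omega) (d := d'+1) (by push_cast; omega),
            if_neg (by rintro ⟨rfl,-⟩; omega),
            show u-1+1 = u from by ring,
            Icc_prod_split R (show v < u+1 by omega), show u+1-1 = u from by ring,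
            Icc_prod_split R hvu,
            PsumN_bot R a (v-1) hub d']
          ring
  · rw [TVal_odd R a b hpar, TVal_odd R a b (show ¬ 2 ∣ ((L:ℤ) - (v - (u+1))) from by omega),
      TVal_odd R a b (show ¬ 2 ∣ ((L:ℤ) - (v - (u-1))) from by omega),
      if_neg (by rintro ⟨rfl, hm⟩; omega)]
    ring

lemma MT (R : ℤ → A) (a b : ℤ) : ∀ (L : ℕ) (u v : ℤ),
    2*a - 1 ≤ u + v - (L:ℤ) → u + v + (L:ℤ) ≤ 2*b + 1 →
    ASum R a b u v L = TVal R a b u v (L:ℤ) := by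
  intro L
  induction L with
  | zero =>
    intro u v _ _
    rw [ASum, Finset.sum_range_one]
    norm_num [Pdim_zero, ZE_zero]
    rcases lt_trichotomy u v with h | rfl | h
    · rw [TVal_lt R a b (by omega) (by omega), if_neg (by omega)]
    · rw [TVal_le R a b le_rfl (d := 0) (by omega), PsumN_zero, if_pos rfl]
      norm_num
    · rw [TVal_gt R a b (by omega) (by omega), if_neg (by omega)]
  | succ L ih =>
    intro u v hg1 hg2
    rw [Arec, ih (u+1) v (by push_cast at *; omega) (by push_cast at *; omega),
      ih (u-1) v (by push_cast at *; omega) (by push_cast at *; omega),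
      show ((L+1:ℕ):ℤ) = (L:ℤ)+1 from by push_cast; ring,
      Trec R a b L u v (by push_cast at *; omega) (by push_cast at *; omega)]

lemma PsumN_odd_vanish (R : ℤ → A) {a c e b : ℤ} {D : ℕ} (hD : D % 2 = 1)
    (hca : c - a + 1 ≤ (D:ℤ)) (hbe : b - e + 1 ≤ (D:ℤ)) :
    PsumN R a c e b D = 0 := by
  rw [PsumN]
  apply Finset.sum_eq_zero
  intro p hp
  rw [Finset.mem_range] at hp
  rcases le_or_gt (2*p) (D-1) with h | h
  · rw [Pdim_big R (show 1 ≤ D - p by omega) (by push_cast; omega), mul_zero]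
  · rw [Pdim_big R (show 1 ≤ p by omega) (by omega), zero_mul]

lemma PsumN_even_full (R : ℤ → A) (a e : ℤ) (t : ℕ) :
    PsumN R a (a+2*t-1) e (e+2*t-1) (2*t) =
      (∏ s ∈ Finset.range t, R (a+2*s+1)) * (∏ s ∈ Finset.range t, R (e+2*s+1)) := by
  rw [PsumN, Finset.sum_eq_single_of_mem t (by simp [Finset.mem_range]; omega)]
  · rw [show 2*t - t = t from by omega, Pdim_full, Pdim_full]
  · intro p hp hne
    rw [Finset.mem_range] at hp
    rcases lt_or_gt_of_ne hne with h | h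
    · rw [Pdim_big R (show 1 ≤ 2*t - p by omega) (by push_cast; omega), mul_zero]
    · rw [Pdim_big R (show 1 ≤ p by omega) (by push_cast; omega), zero_mul]

lemma Zw_max (R : ℤ → A) : ∀ (k : ℕ) (a : ℤ), Zw R a (a + k) k = 1 := by
  intro k
  induction k with
  | zero => intro a; rw [show a + ((0:ℕ):ℤ) = a from by push_cast; ring, Zw_zero, if_pos rfl]
  | succ k ih =>
    intro a
    have hz : Zw R (a-1) (a + ((k+1:ℕ):ℤ)) k = 0 := by
      apply Zw_vanish
      left
      rw [show a + ((k+1:ℕ):ℤ) - (a-1) = ((k+2:ℕ):ℤ) from by push_cast; ring,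
        Int.natAbs_natCast]
      omega
    rw [Zw_succ, hz, mul_zero, add_zero,
      show a + ((k+1:ℕ):ℤ) = (a+1) + (k:ℕ) from by push_cast; ring, ih]

def Pp (R : ℤ → A) (c : ℤ) (t : ℕ) : A := ∏ s ∈ Finset.range t, R (c + 2*s)

lemma Pp_top (R : ℤ → A) (c : ℤ) (t : ℕ) : Pp R c (t+1) = Pp R c t * R (c + 2*t) := by
  rw [Pp, Finset.prod_range_succ, Pp]

lemma Pp_bot (R : ℤ → A) (c : ℤ) (t : ℕ) : Pp R c (t+1) = R c * Pp R (c+2) t := by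
  rw [Pp, Finset.prod_range_succ', Pp, mul_comm]
  congr 1
  · congr 1; push_cast; ring
  · apply Finset.prod_congr rfl; intro s _; congr 1; push_cast; ring

lemma Pp_add (R : ℤ → A) (c : ℤ) (t k : ℕ) :
    Pp R c (t+k) = Pp R c t * Pp R (c+2*t) k := by
  rw [Pp, Finset.prod_range_add, Pp, Pp]
  congr 1
  apply Finset.prod_congr rfl; intro s _; congr 1; push_cast; ring

lemma Pdim_full' (R : ℤ → A) {a b : ℤ} {t : ℕ} (hb : b = a + 2*(t:ℤ) - 1) :
    Pdim R a b t = Pp R (a+1) t := by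
  subst hb
  rw [Pdim_full, Pp]
  apply Finset.prod_congr rfl; intro s _; congr 1; ring

lemma PsumN_even_eval (R : ℤ → A) {a c e b p q : ℤ} {D t : ℕ}
    (hc : c = a + 2*(t:ℤ) - 1) (hb : b = e + 2*(t:ℤ) - 1) (hD : D = 2*t)
    (hp : p = a + 1) (hq : q = e + 1) :
    PsumN R a c e b D = Pp R p t * Pp R q t := by
  subst hc hb hD hp hq
  rw [PsumN_even_full]
  congr 1
  · rw [Pp]; apply Finset.prod_congr rfl; intro s _; congr 1; ring
  · rw [Pp]; apply Finset.prod_congr rfl; intro s _; congr 1; ring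

def Wco (R : ℤ → A) (n : ℤ) (j' i : ℕ) : A :=
  Zodd R (n-(j':ℤ)) (n+(j':ℤ)-1) i
    - R (n-(j':ℤ)-1) * R (n+(j':ℤ)+1) * Zodd R (n-(j':ℤ)-2) (n+(j':ℤ)+1) i

lemma zodd_eq_ze (R : ℤ → A) (u v : ℤ) {j i L : ℕ} (hij : i < j) (hL : (L:ℤ) = 2*(j:ℤ)-1) :
    Zodd R u v (j-i) = ZE R u v ((L:ℤ) - 2*i) := by
  rw [Zodd, if_neg (by omega), ZE, if_pos (by omega)]
  congr 1
  omega

lemma kernel (R : ℤ → A) (n : ℤ) {j j' : ℕ} (hj : 1 ≤ j) (hj' : j' ≤ j) :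
    ∑ i ∈ Finset.range (j-j'+1),
      (-1:A)^i * Pdim R (n-(j:ℤ)) (n+(j:ℤ)-1) i * Wco R n j' (j-i)
    = if j' = j then 1 else 0 := by
  by_cases hjj : j' = j
  · -- j' = j : single term, equals 1
    subst hjj
    rw [if_pos rfl]
    rw [show j' - j' + 1 = 1 from by omega, Finset.sum_range_one]
    rw [show j' - 0 = j' from by omega]
    rw [Wco]
    obtain ⟨k, hk⟩ : ∃ k : ℕ, j' = k + 1 := ⟨j'-1, by omega⟩
    have hz1 : Zodd R (n-(j':ℤ)) (n+(j':ℤ)-1) j' = 1 := by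
      rw [Zodd, if_neg (by omega),
        show n + (j':ℤ) - 1 = (n - (j':ℤ)) + ((2*j'-1 : ℕ):ℤ) from by omega]
      exact Zw_max R (2*j'-1) (n-(j':ℤ))
    have hz2 : Zodd R (n-(j':ℤ)-2) (n+(j':ℤ)+1) j' = 0 := by
      rw [Zodd, if_neg (by omega)]
      apply Zw_vanish
      left
      rw [show n + (j':ℤ) + 1 - (n - (j':ℤ) - 2) = ((2*j'+3 : ℕ):ℤ) from by omega,
        Int.natAbs_natCast]
      omega
    rw [hz1, hz2, Pdim_zero]
    ring
  · -- j' < j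
    have hlt : j' < j := by omega
    rw [if_neg hjj]
    set a := n - (j:ℤ) with ha
    set b := n + (j:ℤ) - 1 with hb
    set u := n - (j':ℤ) with hu
    set v := n + (j':ℤ) - 1 with hv
    set L : ℕ := 2*j - 1 with hLdef
    have hL : (L:ℤ) = 2*(j:ℤ) - 1 := by omega
    have stepA : ∑ i ∈ Finset.range (j-j'+1), (-1:A)^i * Pdim R a b i * Zodd R u v (j-i)
        = ASum R a b u v L + (if j' = 0 then (-1:A)^j * Pdim R a b j else 0) := by
      rw [ASum, ← Finset.sum_subset (Finset.range_subset_range.mpr (show j-j'+1 ≤ L+1 by omega))]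
      · rcases Nat.eq_zero_or_pos j' with hj0 | hj'pos
        · rw [if_pos hj0, hj0, show j - 0 + 1 = j + 1 from by omega,
            Finset.sum_range_succ, Finset.sum_range_succ]
          have h1 : ∀ i ∈ Finset.range j, (-1:A)^i * Pdim R a b i * Zodd R u v (j-i)
              = (-1:A)^i * Pdim R a b i * ZE R u v ((L:ℤ) - 2*i) := by
            intro i hi
            rw [Finset.mem_range] at hi
            rw [zodd_eq_ze R u v hi hL]
          rw [Finset.sum_congr rfl h1]
          have h2 : Zodd R u v (j-j) = 1 := by
            rw [show j - j = 0 from by omega, Zodd, if_pos rfl, if_pos (by omega)]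
          have h3 : ZE R u v ((L:ℤ) - 2*j) = 0 := ZE_neg R (by omega)
          rw [h2, h3]
          ring
        · rw [if_neg (by omega), add_zero]
          apply Finset.sum_congr rfl
          intro i hi
          rw [Finset.mem_range] at hi
          rw [zodd_eq_ze R u v (by omega) hL]
      · intro i hi hni
        rw [Finset.mem_range] at hi
        rw [Finset.mem_range, not_lt] at hni
        rw [ZE_vanish R ?_, mul_zero]
        left
        have : v - u = 2*(j':ℤ) - 1 := by omega
        omega
    have stepB : ∑ i ∈ Finset.range (j-j'+1), (-1:A)^i * Pdim R a b i * Zodd R (u-2) (v+2) (j-i)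
        = ASum R a b (u-2) (v+2) L := by
      rw [ASum, ← Finset.sum_subset (Finset.range_subset_range.mpr (show j-j'+1 ≤ L+1 by omega))]
      · apply Finset.sum_congr rfl
        intro i hi
        rw [Finset.mem_range] at hi
        rcases Nat.lt_or_ge i j with h | h
        · rw [zodd_eq_ze R (u-2) (v+2) h hL]
        · have hij : i = j := by omega
          rw [hij, show j - j = 0 from by omega, Zodd, if_pos rfl, if_neg (by omega),
            ZE_neg R (by omega)]
      · intro i hi hni
        rw [Finset.mem_range] at hi
        rw [Finset.mem_range, not_lt] at hni
        rw [ZE_vanish R ?_, mul_zero]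
        left
        have : (v+2) - (u-2) = 2*(j':ℤ) + 3 := by omega
        omega
    have comb : ∑ i ∈ Finset.range (j-j'+1),
        (-1:A)^i * Pdim R a b i * Wco R n j' (j-i)
        = (∑ i ∈ Finset.range (j-j'+1), (-1:A)^i * Pdim R a b i * Zodd R u v (j-i))
          - R (u-1) * R (v+2) *
            ∑ i ∈ Finset.range (j-j'+1), (-1:A)^i * Pdim R a b i * Zodd R (u-2) (v+2) (j-i) := by
      rw [Finset.mul_sum, ← Finset.sum_sub_distrib]
      apply Finset.sum_congr rfl
      intro i _
      rw [Wco]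
      rw [show n - (j':ℤ) = u from rfl, show n + (j':ℤ) - 1 = v from rfl,
        show n - (j':ℤ) - 1 = u - 1 from rfl, show n + (j':ℤ) + 1 = v + 2 from by omega,
        show n - (j':ℤ) - 2 = u - 2 from rfl]
      ring
    rw [comb, stepA, stepB]
    have hg1m : 2*a - 1 ≤ u + v - (L:ℤ) := by omega
    have hg2m : u + v + (L:ℤ) ≤ 2*b + 1 := by omega
    have hg1c : 2*a - 1 ≤ (u-2) + (v+2) - (L:ℤ) := by omega
    have hg2c : (u-2) + (v+2) + (L:ℤ) ≤ 2*b + 1 := by omega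
    rw [MT R a b L u v hg1m hg2m, MT R a b L (u-2) (v+2) hg1c hg2c]
    rcases Nat.eq_zero_or_pos j' with hj0 | hj'pos
    · -- j' = 0 : v = u - 1
      subst hj0
      rw [if_pos rfl]
      have main : TVal R a b u v (L:ℤ)
          = (-1:A)^(j-1) * (R n * PsumN R a (v-1) (u+1) b (j-1)) := by
        rw [TVal_ge R a b (by omega) (d := j-1) (by omega)]
        rw [show v + 1 = n from by omega, show u = n from by omega, Finset.Icc_self,
          Finset.prod_singleton]
      rcases Nat.even_or_odd j with ⟨t, hjt⟩ | ⟨t, hjt⟩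
      · -- j even = 2t, t ≥ 1
        have hmain0 : PsumN R a (v-1) (u+1) b (j-1) = 0 := by
          apply PsumN_odd_vanish R (by omega) (by omega) (by omega)
        obtain ⟨t', ht'⟩ : ∃ t' : ℕ, t = t' + 1 := ⟨t-1, by omega⟩
        have corr : TVal R a b (u-2) (v+2) (L:ℤ)
            = (-1:A)^(2*t') * PsumN R a (u-2-1) (v+2+1) b (2*t') := by
          rw [TVal_le R a b (by omega) (d := 2*t') (by omega)]
        have hcorr : PsumN R a (u-2-1) (v+2+1) b (2*t') = Pp R (a+1) t' * Pp R (n+3) t' := by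
          refine PsumN_even_eval R ?_ ?_ ?_ ?_ ?_ <;> omega
        have hfull : Pdim R a b j = Pp R (a+1) t' * (R (n-1) * (R (n+1) * Pp R (n+3) t')) := by
          rw [Pdim_full' R (show b = a + 2*(j:ℤ) - 1 from by omega),
            show j = t' + (t'+2) from by omega, Pp_add, Pp_bot, Pp_bot,
            show a+1+2*(t':ℤ) = n-1 from by omega,
            show (n:ℤ)-1+2 = n+1 from by ring, show (n:ℤ)+1+2 = n+3 from by ring]
        rw [main, hmain0, corr, hcorr, hfull, show j = 2*t'+2 from by omega]
        rw [show u - 1 = n - 1 from by omega, show v + 2 = n + 1 from by omega]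
        ring
      · -- j odd = 2t+1
        have hmain : PsumN R a (v-1) (u+1) b (j-1) = Pp R (a+1) t * Pp R (n+2) t := by
          refine PsumN_even_eval R ?_ ?_ ?_ ?_ ?_ <;> omega
        have corr0 : TVal R a b (u-2) (v+2) (L:ℤ) = 0 := by
          rcases Nat.eq_zero_or_pos t with ht0 | htpos
          · exact TVal_lt R a b (by omega) (by omega)
          · rw [TVal_le R a b (by omega) (d := j-2) (by omega)]
            rw [PsumN_odd_vanish R (by omega) (by omega) (by omega), mul_zero]
        have hfull : Pdim R a b j = Pp R (a+1) t * (R n * Pp R (n+2) t) := by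
          rw [Pdim_full' R (show b = a + 2*(j:ℤ) - 1 from by omega),
            show j = t + (t+1) from by omega, Pp_add, Pp_bot,
            show a+1+2*(t:ℤ) = n from by omega, show (n:ℤ)+2 = n+2 from by ring]
        rw [main, hmain, corr0, hfull, show j - 1 = 2*t from by omega,
          show j = 2*t+1 from by omega]
        ring
    · -- 1 ≤ j' < j
      rw [if_neg (by omega), add_zero]
      have main : TVal R a b u v (L:ℤ)
          = (-1:A)^(j-j') * PsumN R a (u-1) (v+1) b (j-j') := by
        rw [TVal_le R a b (by omega) (d := j-j') (by omega)]
      rcases Nat.even_or_odd (j-j') with ⟨t, hjt⟩ | ⟨t, hjt⟩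
      · -- j - j' = 2t even, t ≥ 1
        obtain ⟨t', ht'⟩ : ∃ t' : ℕ, t = t' + 1 := ⟨t-1, by omega⟩
        have hmain : PsumN R a (u-1) (v+1) b (j-j')
            = Pp R (a+1) (t'+1) * Pp R (v+2) (t'+1) := by
          refine PsumN_even_eval R ?_ ?_ ?_ ?_ ?_ <;> omega
        have corr : TVal R a b (u-2) (v+2) (L:ℤ)
            = (-1:A)^(2*t') * PsumN R a (u-2-1) (v+2+1) b (2*t') := by
          rw [TVal_le R a b (by omega) (d := 2*t') (by omega)]
        have hcorr : PsumN R a (u-2-1) (v+2+1) b (2*t') = Pp R (a+1) t' * Pp R (v+2+2) t' := by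
          refine PsumN_even_eval R ?_ ?_ ?_ ?_ ?_ <;> omega
        rw [main, hmain, corr, hcorr, Pp_top, Pp_bot,
          show a + 1 + 2*(t':ℤ) = u - 1 from by omega,
          show j - j' = 2*t'+2 from by omega]
        ring
      · -- j - j' odd
        have hmain : PsumN R a (u-1) (v+1) b (j-j') = 0 := by
          apply PsumN_odd_vanish R (by omega) (by omega) (by omega)
        have corr0 : TVal R a b (u-2) (v+2) (L:ℤ) = 0 := by
          rcases Nat.eq_zero_or_pos t with ht0 | htpos
          · exact TVal_lt R a b (by omega) (by omega)
          · rw [TVal_le R a b (by omega) (d := j-j'-2) (by omega)]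
            rw [PsumN_odd_vanish R (by omega) (by omega) (by omega), mul_zero]
        rw [main, hmain, corr0]
        ring

def Xv (R : ℤ → A) (g : ℕ → A) (m : ℕ) (n : ℤ) (j' : ℕ) : A :=
  (if j' = 0 then R n else 0) - Vp R g m (n+(j':ℤ)) (n-(j':ℤ)-1)

lemma sum_Icc1 (f : ℕ → A) (i : ℕ) :
    ∑ x ∈ Finset.Icc 1 i, f x = ∑ x ∈ Finset.range i, f (x+1) := by
  induction i with
  | zero => rw [Finset.range_zero, Finset.sum_empty, Finset.Icc_eq_empty (by omega),
      Finset.sum_empty]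
  | succ i ih =>
    rw [Finset.sum_range_succ, ← ih, show Finset.Icc 1 (i+1) = insert (i+1) (Finset.Icc 1 i)
      from by ext x; simp [Finset.mem_Icc]; omega,
      Finset.sum_insert (by simp [Finset.mem_Icc]), add_comm]

lemma Gamt_eq (R : ℤ → A) (g : ℕ → A) (m : ℕ) (n : ℤ) (i : ℕ) :
    Gamt R g m i n = ∑ j' ∈ Finset.range (i+1), Wco R n j' i * Xv R g m n j' := by
  rcases Nat.eq_zero_or_pos i with rfl | hpos
  · rw [Finset.sum_range_one, Gamt, if_pos rfl]
    have w0 : Wco R n 0 0 = 1 := by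
      rw [Wco, Zodd, if_pos rfl, if_pos (by push_cast; ring), Zodd, if_pos rfl,
        if_neg (by push_cast; omega)]
      ring
    rw [w0, Xv, if_pos rfl, one_mul,
      show n + ((0:ℕ):ℤ) = n from by push_cast; ring,
      show n - ((0:ℕ):ℤ) - 1 = n - 1 from by push_cast; ring]
  · rw [Gamt, if_neg (by omega), Finset.sum_range_succ']
    have head : Wco R n 0 i * Xv R g m n 0
        = (Zw R n (n - 1) (2 * i - 1) - R (n - 1) * R (n + 1) * Zw R (n - 2) (n + 1) (2 * i - 1))
          * (R n - Vp R g m n (n - 1)) := by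
      rw [Wco, Zodd, if_neg (by omega), Zodd, if_neg (by omega), Xv, if_pos rfl,
        show n + ((0:ℕ):ℤ) - 1 = n - 1 from by push_cast; ring,
        show n + ((0:ℕ):ℤ) + 1 = n + 1 from by push_cast; ring,
        show n + ((0:ℕ):ℤ) = n from by push_cast; ring,
        show n - ((0:ℕ):ℤ) - 2 = n - 2 from by push_cast; ring,
        show n - ((0:ℕ):ℤ) - 1 = n - 1 from by push_cast; ring,
        show n - ((0:ℕ):ℤ) = n from by push_cast; ring]
    have tail : ∑ x ∈ Finset.range i, Wco R n (x+1) i * Xv R g m n (x+1)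
        = - ∑ j ∈ Finset.Icc 1 i,
            (Zw R (n - (j:ℤ)) (n + (j:ℤ) - 1) (2 * i - 1) -
              R (n - (j:ℤ) - 1) * R (n + (j:ℤ) + 1) *
                Zw R (n - (j:ℤ) - 2) (n + (j:ℤ) + 1) (2 * i - 1)) *
              Vp R g m (n + (j:ℤ)) (n - (j:ℤ) - 1) := by
      rw [sum_Icc1, ← Finset.sum_neg_distrib]
      apply Finset.sum_congr rfl
      intro x _
      rw [Wco, Zodd, if_neg (by omega), Zodd, if_neg (by omega), Xv, if_neg (by omega)]
      ring
    rw [head, tail]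
    ring

lemma tri_swap (f : ℕ → ℕ → A) (j : ℕ) :
    ∑ i ∈ Finset.range (j+1), ∑ k ∈ Finset.range (j-i+1), f i k
      = ∑ k ∈ Finset.range (j+1), ∑ i ∈ Finset.range (j-k+1), f i k := by
  have pad : ∀ (g : ℕ → ℕ → A) (i : ℕ), i < j+1 →
      ∑ k ∈ Finset.range (j-i+1), g i k
        = ∑ k ∈ Finset.range (j+1), (if i + k ≤ j then g i k else 0) := by
    intro g i hi
    rw [← Finset.sum_subset (Finset.range_subset_range.mpr (show j-i+1 ≤ j+1 by omega))]
    · apply Finset.sum_congr rfl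
      intro k hk
      rw [Finset.mem_range] at hk
      rw [if_pos (by omega)]
    · intro k _ hk
      rw [Finset.mem_range, not_lt] at hk
      rw [if_neg (by omega)]
  rw [Finset.sum_congr rfl (fun i hi => pad f i (Finset.mem_range.mp hi)), Finset.sum_comm]
  apply Finset.sum_congr rfl
  intro k hk
  rw [Finset.mem_range] at hk
  rw [pad (fun k i => f i k) k hk]
  apply Finset.sum_congr rfl
  intro i _
  have : i + k ≤ j ↔ k + i ≤ j := by omega
  rw [if_congr this rfl rfl]

/-- inversion formula expressing `V'` in terms of the symmetric
quantities `Γ̃`. -/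
theorem stmt_13 {A : Type*} [CommRing A] (R : ℤ → A) (m : ℕ) (hm : 1 ≤ m) (g : ℕ → A)
    (n : ℤ) (hn : 0 ≤ n) (j : ℕ) :
    Vp R g m (n + (j : ℤ)) (n - (j : ℤ) - 1) =
      ∑ i ∈ Finset.range (j + 1),
          (-1 : A) ^ (i + 1) * Pdim R (n - (j : ℤ)) (n + (j : ℤ) - 1) i *
            Gamt R g m (j - i) n +
        (if j = 0 then R n else 0) := by
  rcases Nat.eq_zero_or_pos j with rfl | hj
  · rw [Finset.sum_range_one, if_pos rfl, show (0:ℕ) - 0 = 0 from rfl, Gamt, if_pos rfl,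
      Pdim_zero, show n + ((0:ℕ):ℤ) = n from by push_cast; ring,
      show n - ((0:ℕ):ℤ) - 1 = n - 1 from by push_cast; ring]
    ring
  · have key : ∀ i ∈ Finset.range (j+1),
        (-1:A)^(i+1) * Pdim R (n-(j:ℤ)) (n+(j:ℤ)-1) i * Gamt R g m (j-i) n
        = ∑ k ∈ Finset.range (j-i+1),
            (-1:A)^(i+1) * Pdim R (n-(j:ℤ)) (n+(j:ℤ)-1) i *
              (Wco R n k (j-i) * Xv R g m n k) := by
      intro i _
      rw [Gamt_eq, Finset.mul_sum]
    rw [Finset.sum_congr rfl key,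
      tri_swap (fun i k => (-1:A)^(i+1) * Pdim R (n-(j:ℤ)) (n+(j:ℤ)-1) i *
        (Wco R n k (j-i) * Xv R g m n k)) j]
    have inner : ∀ k ∈ Finset.range (j+1),
        (∑ i ∈ Finset.range (j-k+1), (-1:A)^(i+1) * Pdim R (n-(j:ℤ)) (n+(j:ℤ)-1) i *
          (Wco R n k (j-i) * Xv R g m n k))
        = if k = j then - Xv R g m n k else 0 := by
      intro k hk
      rw [Finset.mem_range] at hk
      have step : ∀ i ∈ Finset.range (j-k+1),
          (-1:A)^(i+1) * Pdim R (n-(j:ℤ)) (n+(j:ℤ)-1) i * (Wco R n k (j-i) * Xv R g m n k)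
          = ((-1:A)^i * Pdim R (n-(j:ℤ)) (n+(j:ℤ)-1) i * Wco R n k (j-i))
              * (- Xv R g m n k) := by
        intro i _
        ring
      rw [Finset.sum_congr rfl step, ← Finset.sum_mul, kernel R n hj (show k ≤ j by omega)]
      by_cases hkj : k = j
      · rw [if_pos hkj, if_pos hkj, one_mul]
      · rw [if_neg hkj, if_neg hkj, zero_mul]
    rw [Finset.sum_congr rfl inner, Finset.sum_ite_eq' (Finset.range (j+1)) j
      (fun k => - Xv R g m n k), if_pos (by simp), Xv, if_neg (by omega)]
    ring
end
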